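/- arXiv:2009.04942 — 3 statements merged into one kernel-verified Lean document; each statement's English description precedes it below -/
import Mathlib

section
/- For a linear subspace W ⊆ ℝ^n with {0} ≠ W ≠ ℝ^n: κ_W = κ_{W^⊥} and χ̄_W = χ̄_{W^⊥}, where W^⊥ is the orthogonal complement of W and χ̄_V := max{‖L_I^V‖ : ∅ ≠ I ⊆ {1,…,n}} for a subspace V ⊆ ℝ^n, ‖L_I^V‖ being the ℓ₂→ℓ₂ operator norm of the lifting map on π_I(V). -/
open scoped BigOperators

variable {ι : Type*} [Fintype ι] [DecidableEq ι]

/-- The ℓ₁ norm of a vector. -/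
noncomputable def norm1 (x : ι → ℝ) : ℝ := ∑ i, |x i|

/-- The ℓ∞ norm of a vector. -/
noncomputable def normInf (x : ι → ℝ) : ℝ := ⨆ i, |x i|

/-- The ℓ₂ norm of a vector. -/
noncomputable def norm2 (x : ι → ℝ) : ℝ := Real.sqrt (∑ i, (x i) ^ 2)

/-- The componentwise negative part `max (-x) 0`. -/
noncomputable def vneg (x : ι → ℝ) : ι → ℝ := fun i => max (-(x i)) 0

/-- The componentwise positive part `max x 0`. -/
noncomputable def vpos (x : ι → ℝ) : ι → ℝ := fun i => max (x i) 0

/-- `y` is sign-consistent with `x`. -/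
def SignConsistent (y x : ι → ℝ) : Prop :=
  (∀ i, 0 ≤ x i * y i) ∧ ∀ i, x i = 0 → y i = 0

/-- The subspace `ℝ^n_C` of vectors supported on `C`. -/
def coordSubspace (C : Set ι) : Submodule ℝ (ι → ℝ) where
  carrier := {x | ∀ i ∉ C, x i = 0}
  zero_mem' := by intro i _; rfl
  add_mem' := by intro a b ha hb i hi; simp [ha i hi, hb i hi]
  smul_mem' := by intro c a ha i hi; simp [ha i hi]

/-- `C` is a circuit of the subspace `W`: `W ∩ ℝ^n_C` is one-dimensional and no
strict subset of `C` has this property. -/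
def IsCircuit (W : Submodule ℝ (ι → ℝ)) (C : Set ι) : Prop :=
  Module.finrank ℝ ↥(W ⊓ coordSubspace C) = 1 ∧
  ∀ C' : Set ι, C' ⊂ C → Module.finrank ℝ ↥(W ⊓ coordSubspace C') ≠ 1

/-- The circuit imbalance measure `κ_W`. -/
noncomputable def kappa (W : Submodule ℝ (ι → ℝ)) : ℝ :=
  sSup ({1} ∪ {r | ∃ C : Set ι, IsCircuit W C ∧ ∃ g ∈ W, g ≠ 0 ∧ {i | g i ≠ 0} = C ∧
    r = sSup ((fun i => |g i|) '' C) / sInf ((fun i => |g i|) '' C)})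

/-- The matroidal closure of `K` with respect to `W`. -/
def clos (W : Submodule ℝ (ι → ℝ)) (K : Set ι) : Set ι :=
  K ∪ {j | j ∉ K ∧ ∃ C : Set ι, IsCircuit W C ∧ j ∈ C ∧ C ⊆ K ∪ {j}}

/-- `z` is the minimum-norm lift `L_I^W(p)` of `p` to `W`:
`z ∈ W`, `z` agrees with `p` on `I`, and `z` has minimum ℓ₂-norm among such vectors. -/
def IsMinLift (W : Submodule ℝ (ι → ℝ)) (I : Finset ι) (p z : ι → ℝ) : Prop :=
  z ∈ W ∧ (∀ i ∈ I, z i = p i) ∧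
  ∀ z' ∈ W, (∀ i ∈ I, z' i = p i) → norm2 z ≤ norm2 z'

/-- The ℓ₂→ℓ₂ operator norm of the lifting map `L_I^W` on `π_I(W)`. -/
noncomputable def liftOpNorm (W : Submodule ℝ (ι → ℝ)) (I : Finset ι) : ℝ :=
  sSup {r | ∃ p z, IsMinLift W I p z ∧ r = norm2 z / Real.sqrt (∑ i ∈ I, (p i) ^ 2)}

/-- The condition number `χ̄_W = max{‖L_I^W‖ : ∅ ≠ I}`. -/
noncomputable def chiBar (W : Submodule ℝ (ι → ℝ)) : ℝ :=
  sSup {r | ∃ I : Finset ι, I.Nonempty ∧ r = liftOpNorm W I}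

/-- The orthogonal complement of `W` in `ℝ^n`. -/
def orthComp (W : Submodule ℝ (ι → ℝ)) : Submodule ℝ (ι → ℝ) where
  carrier := {y | ∀ x ∈ W, ∑ i, x i * y i = 0}
  zero_mem' := by intro x hx; simp
  add_mem' := by
    intro a b ha hb x hx
    simpa [mul_add, Finset.sum_add_distrib, ha x hx] using hb x hx
  smul_mem' := by
    intro c a ha x hx
    have h := ha x hx
    have : ∑ i, x i * (c • a) i = c * ∑ i, x i * a i := by
      rw [Finset.mul_sum]
      refine Finset.sum_congr rfl fun i _ => ?_
      simp [Pi.smul_apply, smul_eq_mul]; ring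
    simpa [this, h]

/-- `x` is a feasible solution to the primal program of Primal-Dual(W,d,c). -/
def PrimalFeasible (W : Submodule ℝ (ι → ℝ)) (d x : ι → ℝ) : Prop :=
  x - d ∈ W ∧ ∀ i, 0 ≤ x i

/-- `s` is a feasible solution to the dual program of Primal-Dual(W,d,c). -/
def DualFeasible (W : Submodule ℝ (ι → ℝ)) (c s : ι → ℝ) : Prop :=
  s - c ∈ orthComp W ∧ ∀ i, 0 ≤ s i

/-- `(x,s)` is an optimal solution to Primal-Dual(W,d,c): both feasible and `⟨x,s⟩ = 0`. -/
def IsOptimalPair (W : Submodule ℝ (ι → ℝ)) (d c x s : ι → ℝ) : Prop :=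
  PrimalFeasible W d x ∧ DualFeasible W c s ∧ ∑ i, x i * s i = 0

/-- The ℓ₂→ℓ₂ operator norm of a matrix. -/
noncomputable def l2OpNorm {m n : Type*} [Fintype m] [Fintype n] [DecidableEq n]
    (A : Matrix m n ℝ) : ℝ :=
  ‖LinearMap.toContinuousLinearMap (Matrix.toEuclideanLin A)‖

/-- The max-norm (largest absolute value of an entry) of a matrix. -/
noncomputable def matMaxNorm {m n : Type*} [Fintype m] [Fintype n] (A : Matrix m n ℝ) : ℝ :=
  ⨆ i, ⨆ j, |A i j|

set_option linter.unusedSectionVars false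
set_option linter.unusedVariables false

namespace SelfDualAux

variable {ι : Type*} [Fintype ι] [DecidableEq ι]

noncomputable def dot (x y : ι → ℝ) : ℝ := ∑ i, x i * y i

lemma dot_comm (x y : ι → ℝ) : dot x y = dot y x :=
  Finset.sum_congr rfl fun i _ => mul_comm _ _

lemma mem_orthComp {W : Submodule ℝ (ι → ℝ)} {y} :
    y ∈ orthComp W ↔ ∀ x ∈ W, dot x y = 0 := Iff.rfl

lemma dot_add_right (x y z : ι → ℝ) : dot x (y + z) = dot x y + dot x z := by
  simp [dot, mul_add, Finset.sum_add_distrib]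

lemma dot_add_left (x y z : ι → ℝ) : dot (x + y) z = dot x z + dot y z := by
  rw [dot_comm, dot_add_right, dot_comm z x, dot_comm z y]

lemma dot_smul_right (c : ℝ) (x y : ι → ℝ) : dot x (c • y) = c * dot x y := by
  simp [dot, Finset.mul_sum]; exact Finset.sum_congr rfl fun i _ => by ring

lemma dot_smul_left (c : ℝ) (x y : ι → ℝ) : dot (c • x) y = c * dot x y := by
  rw [dot_comm, dot_smul_right, dot_comm]

lemma dot_sub_right (x y z : ι → ℝ) : dot x (y - z) = dot x y - dot x z := by
  simp [dot, mul_sub, Finset.sum_sub_distrib]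

lemma dot_sub_left (x y z : ι → ℝ) : dot (x - y) z = dot x z - dot y z := by
  rw [dot_comm, dot_sub_right, dot_comm z x, dot_comm z y]

lemma dot_self_nonneg (x : ι → ℝ) : 0 ≤ dot x x :=
  Finset.sum_nonneg fun i _ => mul_self_nonneg _

lemma dot_self_eq_zero {x : ι → ℝ} : dot x x = 0 ↔ x = 0 := by
  constructor
  · intro h
    funext i
    have := (Finset.sum_eq_zero_iff_of_nonneg (fun i _ => mul_self_nonneg (x i))).mp h i
      (Finset.mem_univ i)
    have := mul_self_eq_zero.mp this
    simpa using this
  · rintro rfl; simp [dot]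

noncomputable def eL : EuclideanSpace ℝ ι ≃ₗ[ℝ] (ι → ℝ) := WithLp.linearEquiv 2 ℝ (ι → ℝ)

lemma inner_eq_dot (x y : EuclideanSpace ℝ ι) : (inner ℝ x y : ℝ) = dot (eL x) (eL y) := by
  simp [PiLp.inner_apply, RCLike.inner_apply, dot, eL]
  exact Finset.sum_congr rfl fun i _ => mul_comm _ _

lemma comap_eL_orthComp (W : Submodule ℝ (ι → ℝ)) :
    Submodule.comap (eL (ι := ι)).toLinearMap (orthComp W)
      = (Submodule.comap (eL (ι := ι)).toLinearMap W)ᗮ := by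
  ext y
  simp only [Submodule.mem_comap, Submodule.mem_orthogonal, LinearEquiv.coe_coe]
  constructor
  · intro h u hu
    rw [inner_eq_dot]
    exact h _ hu
  · intro h x hx
    have := h (eL.symm x) (by simpa using hx)
    rw [inner_eq_dot] at this
    simp at this
    exact this

lemma orthComp_orthComp (W : Submodule ℝ (ι → ℝ)) : orthComp (orthComp W) = W := by
  have h1 : Submodule.comap (eL (ι := ι)).toLinearMap (orthComp (orthComp W))
      = Submodule.comap (eL (ι := ι)).toLinearMap W := by
    rw [comap_eL_orthComp (orthComp W), comap_eL_orthComp W,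
      Submodule.orthogonal_orthogonal]
  have hinj : Function.Injective
      (Submodule.comap (eL (ι := ι)).toLinearMap : Submodule ℝ (ι → ℝ) → _) :=
    Submodule.comap_injective_of_surjective eL.surjective
  exact hinj h1

lemma orthComp_anti {U V : Submodule ℝ (ι → ℝ)} (h : U ≤ V) : orthComp V ≤ orthComp U :=
  fun y hy x hx => hy x (h hx)

lemma orthComp_bot : orthComp (⊥ : Submodule ℝ (ι → ℝ)) = ⊤ := by
  ext y
  simp only [Submodule.mem_top, iff_true, mem_orthComp]
  rintro x hx
  simp only [Submodule.mem_bot] at hx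
  simp [hx, dot]

lemma orthComp_top : orthComp (⊤ : Submodule ℝ (ι → ℝ)) = ⊥ := by
  ext y
  simp only [Submodule.mem_bot, mem_orthComp]
  constructor
  · intro h
    have := h y Submodule.mem_top
    rw [dot_comm] at this
    exact dot_self_eq_zero.mp this
  · rintro rfl x _; simp [dot]

lemma exists_dual_vector_of_not_mem {S : Submodule ℝ (ι → ℝ)} {v} (hv : v ∉ S) :
    ∃ y ∈ orthComp S, dot v y ≠ 0 := by
  by_contra h
  push_neg at h
  have : v ∈ orthComp (orthComp S) := fun x hx => by
    show dot x v = 0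
    rw [dot_comm]; exact h x hx
  rw [orthComp_orthComp] at this
  exact hv this

lemma exists_proj (K : Submodule ℝ (ι → ℝ)) (w : ι → ℝ) :
    ∃ a ∈ K, ∀ u ∈ K, dot (w - a) u = 0 := by
  classical
  set K' := Submodule.comap (eL (ι := ι)).toLinearMap K with hK'
  set x : EuclideanSpace ℝ ι := eL.symm w with hx
  refine ⟨eL ((K'.orthogonalProjectionOnto x : EuclideanSpace ℝ ι)), ?_, ?_⟩
  · exact (K'.orthogonalProjectionOnto x).2
  · intro u hu
    have hmem : x - (K'.orthogonalProjectionOnto x : EuclideanSpace ℝ ι) ∈ K'ᗮ :=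
      K'.sub_starProjection_mem_orthogonal x
    have h2 := (Submodule.mem_orthogonal K' _).mp hmem (eL.symm u) (by simpa [hK'] using hu)
    rw [inner_eq_dot] at h2
    rw [dot_comm]
    simpa [map_sub, hx] using h2

lemma quad_nonpos_linear_eq_zero {a b : ℝ} (h : ∀ s : ℝ, a * s ^ 2 + b * s ≤ 0) : b = 0 := by
  by_contra hb
  have hb2 : 0 < b ^ 2 := by positivity
  set ε : ℝ := 1 / (a ^ 2 + b ^ 2 + 1) with hε
  have hεpos : 0 < ε := by positivity
  have haε : 0 < a * ε + 1 := by
    have hD : (0:ℝ) < a ^ 2 + b ^ 2 + 1 := by positivity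
    have hkey : 0 < a + (a ^ 2 + b ^ 2 + 1) := by nlinarith [sq_nonneg (a + 1), sq_nonneg b]
    have : a * ε + 1 = (a + (a ^ 2 + b ^ 2 + 1)) / (a ^ 2 + b ^ 2 + 1) := by
      rw [hε]; field_simp
    rw [this]
    exact div_pos hkey hD
  have := h (b * ε)
  nlinarith [mul_pos (mul_pos hb2 hεpos) haε]

lemma quad_nonneg_linear_eq_zero {a b : ℝ} (h : ∀ s : ℝ, 0 ≤ a * s ^ 2 + b * s) : b = 0 := by
  have : ∀ s : ℝ, (-a) * s ^ 2 + (-b) * s ≤ 0 := fun s => by have := h s; linarith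
  have := quad_nonpos_linear_eq_zero this
  linarith

end SelfDualAux
namespace SelfDualAux
set_option linter.unusedSectionVars false
set_option linter.unusedVariables false
variable {ι : Type*} [Fintype ι] [DecidableEq ι]

def supp (g : ι → ℝ) : Set ι := {i | g i ≠ 0}

lemma mem_coordSubspace {C : Set ι} {x : ι → ℝ} :
    x ∈ coordSubspace C ↔ ∀ i ∉ C, x i = 0 := Iff.rfl

lemma mem_coordSubspace_iff_supp {C : Set ι} {x : ι → ℝ} :
    x ∈ coordSubspace C ↔ supp x ⊆ C := by
  constructor
  · intro h i hi
    by_contra hiC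
    exact hi (h i hiC)
  · intro h i hi
    by_contra hx
    exact hi (h hx)

lemma coordSubspace_mono {C D : Set ι} (h : C ⊆ D) : coordSubspace C ≤ coordSubspace D :=
  fun x hx => mem_coordSubspace_iff_supp.mpr ((mem_coordSubspace_iff_supp.mp hx).trans h)

lemma supp_nonempty {g : ι → ℝ} (hg : g ≠ 0) : (supp g).Nonempty := by
  rcases Function.ne_iff.mp hg with ⟨i, hi⟩
  exact ⟨i, hi⟩

/-- minimal support element containing a prescribed index -/
lemma exists_min_supp (V : Submodule ℝ (ι → ℝ)) (y : ι → ℝ) (hy : y ∈ V) (i₀ : ι)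
    (hi₀ : y i₀ ≠ 0) :
    ∃ h ∈ V, h i₀ ≠ 0 ∧ supp h ⊆ supp y ∧
      ∀ u ∈ V, u ≠ 0 → supp u ⊆ supp h → supp u = supp h := by
  classical
  set P : ℕ → Prop := fun k => ∃ h, h ∈ V ∧ h i₀ ≠ 0 ∧ supp h ⊆ supp y ∧ (supp h).ncard = k
    with hP
  have hPy : P (supp y).ncard := ⟨y, hy, hi₀, subset_rfl, rfl⟩
  have hex : ∃ k, P k := ⟨_, hPy⟩
  obtain ⟨h, hhV, hhi₀, hhy, hcard⟩ := Nat.find_spec hex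
  refine ⟨h, hhV, hhi₀, hhy, ?_⟩
  intro u huV hu0 husupp
  by_contra hne
  have hss : supp u ⊂ supp h := ssubset_of_subset_of_ne husupp hne
  by_cases hui : u i₀ ≠ 0
  · have : P (supp u).ncard := ⟨u, huV, hui, husupp.trans hhy, rfl⟩
    have hlt : (supp u).ncard < Nat.find hex := by
      rw [← hcard]
      exact Set.ncard_lt_ncard hss (Set.toFinite _)
    exact Nat.find_min hex hlt this
  · push_neg at hui
    obtain ⟨k, hk⟩ := Function.ne_iff.mp hu0
    have hk : u k ≠ 0 := by simpa using hk
    set h' : ι → ℝ := h - (h k / u k) • u with hh'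
    have hh'V : h' ∈ V := V.sub_mem hhV (V.smul_mem _ huV)
    have hh'i₀ : h' i₀ ≠ 0 := by
      simp only [hh', Pi.sub_apply, Pi.smul_apply, smul_eq_mul, hui, mul_zero, sub_zero]
      exact hhi₀
    have hh'k : h' k = 0 := by
      simp only [hh', Pi.sub_apply, Pi.smul_apply, smul_eq_mul]
      field_simp
      ring
    have hsub : supp h' ⊆ supp h := by
      intro m hm
      by_contra hmh
      have hm1 : h m = 0 := by by_contra hc; exact hmh hc
      have hm2 : u m = 0 := by
        by_contra hc
        exact hmh (husupp hc)
      simp only [supp, Set.mem_setOf_eq, hh', Pi.sub_apply, Pi.smul_apply, smul_eq_mul,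
        hm1, hm2, mul_zero, sub_zero] at hm
      exact hm rfl
    have hkh : k ∈ supp h := husupp hk
    have hssh : supp h' ⊂ supp h := by
      refine ssubset_of_subset_of_ne hsub ?_
      intro heq
      have : k ∈ supp h' := heq ▸ hkh
      exact this hh'k
    have : P (supp h').ncard := ⟨h', hh'V, hh'i₀, hsub.trans hhy, rfl⟩
    have hlt : (supp h').ncard < Nat.find hex := by
      rw [← hcard]
      exact Set.ncard_lt_ncard hssh (Set.toFinite _)
    exact Nat.find_min hex hlt this

lemma circuit_of_min (V : Submodule ℝ (ι → ℝ)) (h : ι → ℝ) (hhV : h ∈ V) (hne : h ≠ 0)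
    (hmin : ∀ u ∈ V, u ≠ 0 → supp u ⊆ supp h → supp u = supp h) :
    IsCircuit V (supp h) := by
  classical
  have hspan : V ⊓ coordSubspace (supp h) = Submodule.span ℝ {h} := by
    apply le_antisymm
    · intro v hv
      obtain ⟨hvV, hvC⟩ := hv
      obtain ⟨i₀, hi₀⟩ := supp_nonempty hne
      have hi₀' : h i₀ ≠ 0 := hi₀
      set w : ι → ℝ := v - (v i₀ / h i₀) • h with hw
      have hwV : w ∈ V := V.sub_mem hvV (V.smul_mem _ hhV)
      have hwi₀ : w i₀ = 0 := by
        simp only [hw, Pi.sub_apply, Pi.smul_apply, smul_eq_mul]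
        field_simp
        ring
      have hwsupp : supp w ⊆ supp h := by
        intro m hm
        by_contra hmh
        have hm1 : h m = 0 := by by_contra hc; exact hmh hc
        have hm2 : v m = 0 := by
          by_contra hc
          exact hmh (mem_coordSubspace_iff_supp.mp hvC hc)
        simp only [supp, Set.mem_setOf_eq, hw, Pi.sub_apply, Pi.smul_apply, smul_eq_mul,
          hm1, hm2, mul_zero, sub_zero] at hm
        exact hm rfl
      have hw0 : w = 0 := by
        by_contra hw0
        have := hmin w hwV hw0 hwsupp
        have : i₀ ∈ supp w := this ▸ hi₀
        exact this hwi₀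
      have : v = (v i₀ / h i₀) • h := by
        have := sub_eq_zero.mp hw0
        exact this
      rw [Submodule.mem_span_singleton]
      exact ⟨v i₀ / h i₀, this.symm⟩
    · rw [Submodule.span_le, Set.singleton_subset_iff]
      exact ⟨hhV, mem_coordSubspace_iff_supp.mpr subset_rfl⟩
  constructor
  · rw [hspan]
    exact finrank_span_singleton hne
  · intro C' hC' hrank
    have hne' : V ⊓ coordSubspace C' ≠ ⊥ := by
      intro hbot
      rw [hbot] at hrank
      simp [finrank_bot] at hrank
    obtain ⟨v, hv, hv0⟩ := Submodule.ne_bot_iff _ |>.mp hne'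
    have hvsupp : supp v ⊆ C' := mem_coordSubspace_iff_supp.mp hv.2
    have := hmin v hv.1 hv0 (hvsupp.trans hC'.subset)
    have : supp h ⊆ C' := this ▸ hvsupp
    exact hC'.2 this

end SelfDualAux
namespace SelfDualAux
set_option linter.unusedSectionVars false
set_option linter.unusedVariables false
variable {ι : Type*} [Fintype ι] [DecidableEq ι]

lemma dot_single (i : ι) (y : ι → ℝ) : dot (Pi.single i (1 : ℝ)) y = y i := by
  rw [dot]
  rw [Finset.sum_eq_single i]
  · simp
  · intro b _ hb
    rw [Pi.single_eq_of_ne hb]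
    ring
  · intro hi
    exact absurd (Finset.mem_univ i) hi

lemma single_mem_coord {S : Set ι} {i : ι} (hi : i ∈ S) :
    Pi.single i (1 : ℝ) ∈ coordSubspace S := by
  intro k hk
  exact Pi.single_eq_of_ne (fun hki => hk (by rw [hki]; exact hi)) 1

lemma dual_circuit {W : Submodule ℝ (ι → ℝ)} {C : Set ι} (hC : IsCircuit W C)
    {g : ι → ℝ} (hg : g ∈ W) (hsupp : supp g = C) {i j : ι} (hi : i ∈ C) (hj : j ∈ C)
    (hij : i ≠ j) :
    ∃ h : ι → ℝ, h ∈ orthComp W ∧ h ≠ 0 ∧ IsCircuit (orthComp W) (supp h) ∧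
      i ∈ supp h ∧ j ∈ supp h ∧ g i * h i + g j * h j = 0 := by
  classical
  set S : Submodule ℝ (ι → ℝ) := W ⊔ coordSubspace (C \ {i, j}) with hS
  have hni : Pi.single i (1 : ℝ) ∉ S := by
    intro hmem
    rw [hS, Submodule.mem_sup] at hmem
    obtain ⟨w, hwW, u, hu, hwu⟩ := hmem
    have hui : u i = 0 := hu i (by simp)
    have hwi : w i = 1 := by
      have := congrFun hwu i
      simp only [Pi.add_apply, Pi.single_eq_same] at this
      linarith [this, hui]
    have hw0 : w ≠ 0 := by
      intro h0
      rw [h0] at hwi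
      simp at hwi
    have hwC : w ∈ coordSubspace (C \ {j}) := by
      intro k hk
      have hki : k ≠ i := by
        intro hki
        exact hk (hki ▸ ⟨hi, hij⟩)
      have huk : u k = 0 := by
        apply hu k
        intro ⟨hkC, hknot⟩
        simp only [Set.mem_insert_iff, Set.mem_singleton_iff] at hknot
        push_neg at hknot
        exact hk ⟨hkC, hknot.2⟩
      have := congrFun hwu k
      simp only [Pi.add_apply, Pi.single_eq_of_ne hki] at this
      linarith [this, huk]
    have hle : W ⊓ coordSubspace (C \ {j}) ≤ W ⊓ coordSubspace C :=
      inf_le_inf_left W (coordSubspace_mono Set.diff_subset)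
    have h1 : Module.finrank ℝ ↥(W ⊓ coordSubspace (C \ {j})) ≤ 1 :=
      hC.1 ▸ Submodule.finrank_mono hle
    have h2 : 0 < Module.finrank ℝ ↥(W ⊓ coordSubspace (C \ {j})) := by
      rw [Module.finrank_pos_iff_exists_ne_zero]
      refine ⟨⟨w, hwW, hwC⟩, ?_⟩
      exact fun hc => hw0 (by simpa using congrArg Subtype.val hc)
    have h3 : Module.finrank ℝ ↥(W ⊓ coordSubspace (C \ {j})) = 1 := by omega
    exact hC.2 (C \ {j}) (Set.sdiff_singleton_ssubset.mpr hj) h3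
  obtain ⟨y, hyS, hyi⟩ := exists_dual_vector_of_not_mem hni
  rw [dot_single] at hyi
  have hyW : y ∈ orthComp W := orthComp_anti (le_sup_left (b := coordSubspace (C \ {i, j}))) hyS
  have hyC : ∀ k ∈ C \ ({i, j} : Set ι), y k = 0 := by
    intro k hk
    have := hyS (Pi.single k (1 : ℝ))
      (le_sup_right (a := W) (single_mem_coord hk))
    have h2 : dot (Pi.single k (1 : ℝ)) y = 0 := this
    rwa [dot_single] at h2
  obtain ⟨h, hhW, hhi, hhy, hhmin⟩ := exists_min_supp (orthComp W) y hyW i hyi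
  have hcirc := circuit_of_min (orthComp W) h hhW (fun h0 => hhi (by rw [h0]; rfl)) hhmin
  have hgh : dot g h = 0 := hhW g hg
  have hsum : dot g h = g i * h i + g j * h j := by
    rw [dot]
    rw [← Finset.sum_subset (Finset.subset_univ {i, j})]
    · rw [Finset.sum_pair hij]
    · intro k _ hk
      simp only [Finset.mem_insert, Finset.mem_singleton] at hk
      push_neg at hk
      by_cases hgk : g k = 0
      · rw [hgk]; ring
      · have hkC : k ∈ C := hsupp ▸ hgk
        have hyk : y k = 0 := hyC k ⟨hkC, by simp [hk.1, hk.2]⟩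
        have hhk : h k = 0 := by
          by_contra hc
          exact (hhy hc) hyk
        rw [hhk]; ring
  have hrel : g i * h i + g j * h j = 0 := hsum ▸ hgh
  have hgi : g i ≠ 0 := by rw [← hsupp] at hi; exact hi
  have hhj : h j ≠ 0 := by
    intro hc
    rw [hc, mul_zero, add_zero] at hrel
    exact (mul_ne_zero hgi hhi) hrel
  exact ⟨h, hhW, fun h0 => hhi (by rw [h0]; rfl), hcirc, hhi, hhj, hrel⟩

end SelfDualAux
namespace SelfDualAux
set_option linter.unusedSectionVars false
set_option linter.unusedVariables false
variable {ι : Type*} [Fintype ι] [DecidableEq ι]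

lemma exists_isGreatest_image {C : Set ι} (hne : C.Nonempty) (f : ι → ℝ) :
    ∃ i ∈ C, IsGreatest (f '' C) (f i) := by
  obtain ⟨i, hiC, hmax⟩ := Set.exists_max_image C f (Set.toFinite C) hne
  exact ⟨i, hiC, ⟨i, hiC, rfl⟩, by rintro r ⟨k, hk, rfl⟩; exact hmax k hk⟩

lemma exists_isLeast_image {C : Set ι} (hne : C.Nonempty) (f : ι → ℝ) :
    ∃ i ∈ C, IsLeast (f '' C) (f i) := by
  obtain ⟨i, hiC, hmin⟩ := Set.exists_min_image C f (Set.toFinite C) hne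
  exact ⟨i, hiC, ⟨i, hiC, rfl⟩, by rintro r ⟨k, hk, rfl⟩; exact hmin k hk⟩

def kappaSet (V : Submodule ℝ (ι → ℝ)) : Set ℝ :=
  {r | ∃ C : Set ι, IsCircuit V C ∧ ∃ g ∈ V, g ≠ 0 ∧ {i | g i ≠ 0} = C ∧
    r = sSup ((fun i => |g i|) '' C) / sInf ((fun i => |g i|) '' C)}

lemma kappa_def (V : Submodule ℝ (ι → ℝ)) : kappa V = sSup ({1} ∪ kappaSet V) := rfl

lemma kappaSet_piece_subsingleton (V : Submodule ℝ (ι → ℝ)) (C : Set ι) :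
    Set.Subsingleton {r | IsCircuit V C ∧ ∃ g ∈ V, g ≠ 0 ∧ {i | g i ≠ 0} = C ∧
      r = sSup ((fun i => |g i|) '' C) / sInf ((fun i => |g i|) '' C)} := by
  classical
  rintro r₁ ⟨hC, g₁, hg₁V, hg₁0, hs₁, rfl⟩ r₂ ⟨-, g₂, hg₂V, hg₂0, hs₂, rfl⟩
  have hs₁' : supp g₁ = C := hs₁
  have hs₂' : supp g₂ = C := hs₂
  have hmem₁ : g₁ ∈ V ⊓ coordSubspace C :=
    ⟨hg₁V, mem_coordSubspace_iff_supp.mpr (hs₁'.le)⟩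
  have hmem₂ : g₂ ∈ V ⊓ coordSubspace C :=
    ⟨hg₂V, mem_coordSubspace_iff_supp.mpr (hs₂'.le)⟩
  have hv1ne : (⟨g₁, hmem₁⟩ : ↥(V ⊓ coordSubspace C)) ≠ 0 :=
    fun hc => hg₁0 (by simpa using congrArg Subtype.val hc)
  have hspan := (finrank_eq_one_iff_of_nonzero _ hv1ne).mp hC.1
  have hmem2' : (⟨g₂, hmem₂⟩ : ↥(V ⊓ coordSubspace C)) ∈
      Submodule.span ℝ {(⟨g₁, hmem₁⟩ : ↥(V ⊓ coordSubspace C))} := by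
    rw [hspan]; trivial
  obtain ⟨c, hc⟩ := Submodule.mem_span_singleton.mp hmem2'
  have hcg : c • g₁ = g₂ := congrArg Subtype.val hc
  have hc0 : c ≠ 0 := by
    rintro rfl
    rw [zero_smul] at hcg
    exact hg₂0 hcg.symm
  have hCne : C.Nonempty := hs₁' ▸ supp_nonempty hg₁0
  obtain ⟨iM, hiM, hGr⟩ := exists_isGreatest_image hCne (fun i => |g₁ i|)
  obtain ⟨jm, hjm, hLe⟩ := exists_isLeast_image hCne (fun i => |g₁ i|)
  have habs : ∀ k, |g₂ k| = |c| * |g₁ k| := by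
    intro k
    rw [← hcg]
    simp [abs_mul]
  have hGr₂ : IsGreatest ((fun i => |g₂ i|) '' C) (|g₂ iM|) := by
    constructor
    · exact ⟨iM, hiM, rfl⟩
    · rintro r ⟨k, hk, rfl⟩
      simp only [habs]
      exact mul_le_mul_of_nonneg_left (hGr.2 ⟨k, hk, rfl⟩) (abs_nonneg c)
  have hLe₂ : IsLeast ((fun i => |g₂ i|) '' C) (|g₂ jm|) := by
    constructor
    · exact ⟨jm, hjm, rfl⟩
    · rintro r ⟨k, hk, rfl⟩
      simp only [habs]
      exact mul_le_mul_of_nonneg_left (hLe.2 ⟨k, hk, rfl⟩) (abs_nonneg c)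
  rw [hGr.csSup_eq, hLe.csInf_eq, hGr₂.csSup_eq, hLe₂.csInf_eq, habs iM, habs jm,
    mul_div_mul_left _ _ (abs_ne_zero.mpr hc0)]

lemma kappaSet_finite (V : Submodule ℝ (ι → ℝ)) : (kappaSet V).Finite := by
  classical
  have hsub : kappaSet V ⊆ ⋃ C ∈ (Set.univ : Set (Set ι)),
      {r | IsCircuit V C ∧ ∃ g ∈ V, g ≠ 0 ∧ {i | g i ≠ 0} = C ∧
        r = sSup ((fun i => |g i|) '' C) / sInf ((fun i => |g i|) '' C)} := by
    rintro r ⟨C, hC, hrest⟩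
    exact Set.mem_biUnion (Set.mem_univ C) ⟨hC, hrest⟩
  exact Set.Finite.subset
    (Set.Finite.biUnion Set.finite_univ fun C _ => (kappaSet_piece_subsingleton V C).finite)
    hsub

lemma kappa_bddAbove (V : Submodule ℝ (ι → ℝ)) : BddAbove ({1} ∪ kappaSet V) :=
  ((Set.finite_singleton 1).union (kappaSet_finite V)).bddAbove

lemma one_le_kappa (V : Submodule ℝ (ι → ℝ)) : 1 ≤ kappa V :=
  le_csSup (kappa_bddAbove V) (Set.mem_union_left _ rfl)

lemma kappa_le_dual (W : Submodule ℝ (ι → ℝ)) : kappa W ≤ kappa (orthComp W) := by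
  classical
  rw [kappa_def]
  refine csSup_le ⟨(1 : ℝ), Set.mem_union_left _ rfl⟩ ?_
  rintro r (hr | ⟨C, hC, g, hgW, hg0, hsupp, rfl⟩)
  · rw [Set.mem_singleton_iff] at hr
    exact hr ▸ one_le_kappa _
  · have hsupp' : supp g = C := hsupp
    have hCne : C.Nonempty := hsupp' ▸ supp_nonempty hg0
    obtain ⟨iM, hiM, hGr⟩ := exists_isGreatest_image hCne (fun i => |g i|)
    obtain ⟨jm, hjm, hLe⟩ := exists_isLeast_image hCne (fun i => |g i|)
    rw [hGr.csSup_eq, hLe.csInf_eq]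
    have hgjm : g jm ≠ 0 := by rw [← hsupp'] at hjm; exact hjm
    have hgiM : g iM ≠ 0 := by rw [← hsupp'] at hiM; exact hiM
    by_cases hij : iM = jm
    · rw [hij, div_self (abs_ne_zero.mpr hgjm)]
      exact one_le_kappa _
    · obtain ⟨h, hhW, hh0, hhcirc, hiMh, hjmh, hrel⟩ :=
        dual_circuit hC hgW hsupp' hiM hjm hij
      have hhiM : h iM ≠ 0 := hiMh
      have hhjm : h jm ≠ 0 := hjmh
      have habs : |g iM| * |h iM| = |g jm| * |h jm| := by
        have h1 : g iM * h iM = -(g jm * h jm) := by linarith [hrel]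
        calc |g iM| * |h iM| = |g iM * h iM| := (abs_mul _ _).symm
          _ = |g jm * h jm| := by rw [h1, abs_neg]
          _ = |g jm| * |h jm| := abs_mul _ _
      have key1 : |g iM| / |g jm| = |h jm| / |h iM| := by
        rw [div_eq_div_iff (abs_ne_zero.mpr hgjm) (abs_ne_zero.mpr hhiM)]
        linarith [habs]
      rw [key1]
      have hDne : (supp h).Nonempty := supp_nonempty hh0
      obtain ⟨iH, hiH, hGr'⟩ := exists_isGreatest_image hDne (fun i => |h i|)
      obtain ⟨jH, hjH, hLe'⟩ := exists_isLeast_image hDne (fun i => |h i|)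
      have hhjH : h jH ≠ 0 := hjH
      have step1 : |h jm| / |h iM| ≤ |h iH| / |h jH| := by
        apply div_le_div₀ (abs_nonneg _) (hGr'.2 ⟨jm, hjmh, rfl⟩) (abs_pos.mpr hhjH)
          (hLe'.2 ⟨iM, hiMh, rfl⟩)
      have step2 : |h iH| / |h jH| ≤ kappa (orthComp W) := by
        have hmem : sSup ((fun i => |h i|) '' supp h) / sInf ((fun i => |h i|) '' supp h)
            ∈ kappaSet (orthComp W) :=
          ⟨supp h, hhcirc, h, hhW, hh0, rfl, rfl⟩
        rw [hGr'.csSup_eq, hLe'.csInf_eq] at hmem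
        exact le_csSup (kappa_bddAbove _) (Set.mem_union_right _ hmem)
      linarith

lemma kappa_self_dual (W : Submodule ℝ (ι → ℝ)) : kappa W = kappa (orthComp W) := by
  refine le_antisymm (kappa_le_dual W) ?_
  have := kappa_le_dual (orthComp W)
  rwa [orthComp_orthComp] at this

end SelfDualAux
namespace SelfDualAux
set_option linter.unusedSectionVars false
set_option linter.unusedVariables false
variable {ι : Type*} [Fintype ι] [DecidableEq ι]

noncomputable def sqS (I : Finset ι) (z : ι → ℝ) : ℝ := ∑ i ∈ I, z i ^ 2

noncomputable def sq2 (z : ι → ℝ) : ℝ := ∑ i, z i ^ 2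

noncomputable def dotS (I : Finset ι) (z w : ι → ℝ) : ℝ := ∑ i ∈ I, z i * w i

def Wres (V : Submodule ℝ (ι → ℝ)) (I : Finset ι) : Submodule ℝ (ι → ℝ) :=
  V ⊓ coordSubspace {i | i ∉ I}

def Wred (V : Submodule ℝ (ι → ℝ)) (I : Finset ι) : Submodule ℝ (ι → ℝ) :=
  V ⊓ orthComp (Wres V I)

lemma norm2_eq (z : ι → ℝ) : norm2 z = Real.sqrt (sq2 z) := rfl

lemma sq2_nonneg (z : ι → ℝ) : 0 ≤ sq2 z := Finset.sum_nonneg fun i _ => sq_nonneg _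

lemma sqS_nonneg (I : Finset ι) (z : ι → ℝ) : 0 ≤ sqS I z :=
  Finset.sum_nonneg fun i _ => sq_nonneg _

lemma sq2_eq_zero {z : ι → ℝ} : sq2 z = 0 ↔ z = 0 := by
  constructor
  · intro h
    funext i
    have := (Finset.sum_eq_zero_iff_of_nonneg (fun i _ => sq_nonneg (z i))).mp h i
      (Finset.mem_univ i)
    have := pow_eq_zero_iff (n := 2) (by norm_num) |>.mp this
    simpa using this
  · rintro rfl; simp [sq2]

lemma sq2_pos {z : ι → ℝ} (hz : z ≠ 0) : 0 < sq2 z :=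
  lt_of_le_of_ne (sq2_nonneg z) (fun h => hz (sq2_eq_zero.mp h.symm))

lemma mem_Wres {V : Submodule ℝ (ι → ℝ)} {I : Finset ι} {x : ι → ℝ} :
    x ∈ Wres V I ↔ x ∈ V ∧ ∀ i ∈ I, x i = 0 := by
  constructor
  · rintro ⟨hV, hc⟩
    refine ⟨hV, fun i hi => hc i ?_⟩
    simp [hi]
  · rintro ⟨hV, hc⟩
    refine ⟨hV, fun i hi => ?_⟩
    simp only [Set.mem_setOf_eq, not_not] at hi
    exact hc i hi

lemma Wred_le {V : Submodule ℝ (ι → ℝ)} {I : Finset ι} : Wred V I ≤ V := inf_le_left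

lemma Wred_perp {V : Submodule ℝ (ι → ℝ)} {I : Finset ι} {z : ι → ℝ} (hz : z ∈ Wred V I) :
    ∀ u ∈ Wres V I, dot z u = 0 := fun u hu => by
  rw [dot_comm]; exact hz.2 u hu

lemma sqS_eq_dotS (I : Finset ι) (z : ι → ℝ) : sqS I z = dotS I z z :=
  Finset.sum_congr rfl fun i _ => sq (z i)

lemma sq2_split (I : Finset ι) (z : ι → ℝ) : sq2 z = sqS I z + ∑ i ∈ Iᶜ, z i ^ 2 :=
  (Finset.sum_add_sum_compl I _).symm

lemma sqS_le_sq2 (I : Finset ι) (z : ι → ℝ) : sqS I z ≤ sq2 z := by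
  rw [sq2_split I z]
  have : 0 ≤ ∑ i ∈ Iᶜ, z i ^ 2 := Finset.sum_nonneg fun i _ => sq_nonneg _
  linarith

lemma sqS_pos_of_Wred {V : Submodule ℝ (ι → ℝ)} {I : Finset ι} {z : ι → ℝ}
    (hz : z ∈ Wred V I) (hz0 : z ≠ 0) : 0 < sqS I z := by
  rcases lt_or_eq_of_le (sqS_nonneg I z) with h | h
  · exact h
  · exfalso
    have hzero : ∀ i ∈ I, z i = 0 := by
      intro i hi
      have := (Finset.sum_eq_zero_iff_of_nonneg (fun i _ => sq_nonneg (z i))).mp h.symm i hi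
      have := pow_eq_zero_iff (n := 2) (by norm_num) |>.mp this
      exact this
    have hzres : z ∈ Wres V I := mem_Wres.mpr ⟨hz.1, hzero⟩
    have h4 := Wred_perp hz z hzres
    exact hz0 (dot_self_eq_zero.mp h4)

lemma dot_self_eq_sq2 (z : ι → ℝ) : dot z z = sq2 z :=
  Finset.sum_congr rfl fun i _ => (sq (z i)).symm

lemma sq2_add (x y : ι → ℝ) : sq2 (x + y) = sq2 x + 2 * dot x y + sq2 y := by
  unfold sq2 dot
  rw [Finset.mul_sum, ← Finset.sum_add_distrib, ← Finset.sum_add_distrib]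
  exact Finset.sum_congr rfl fun i _ => by simp only [Pi.add_apply]; ring

lemma sqS_add (I : Finset ι) (x y : ι → ℝ) :
    sqS I (x + y) = sqS I x + 2 * dotS I x y + sqS I y := by
  unfold sqS dotS
  rw [Finset.mul_sum, ← Finset.sum_add_distrib, ← Finset.sum_add_distrib]
  exact Finset.sum_congr rfl fun i _ => by simp only [Pi.add_apply]; ring

lemma sq2_smul (c : ℝ) (x : ι → ℝ) : sq2 (c • x) = c ^ 2 * sq2 x := by
  unfold sq2
  rw [Finset.mul_sum]
  exact Finset.sum_congr rfl fun i _ => by simp only [Pi.smul_apply, smul_eq_mul]; ring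

lemma sqS_smul (I : Finset ι) (c : ℝ) (x : ι → ℝ) : sqS I (c • x) = c ^ 2 * sqS I x := by
  unfold sqS
  rw [Finset.mul_sum]
  exact Finset.sum_congr rfl fun i _ => by simp only [Pi.smul_apply, smul_eq_mul]; ring

lemma dotS_smul_right (I : Finset ι) (c : ℝ) (x y : ι → ℝ) :
    dotS I x (c • y) = c * dotS I x y := by
  unfold dotS
  rw [Finset.mul_sum]
  exact Finset.sum_congr rfl fun i _ => by simp only [Pi.smul_apply, smul_eq_mul]; ring

noncomputable def redSet (V : Submodule ℝ (ι → ℝ)) (I : Finset ι) : Set ℝ :=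
  {r | ∃ z ∈ Wred V I, r = norm2 z / Real.sqrt (sqS I z)}

lemma liftOpNorm_eq (V : Submodule ℝ (ι → ℝ)) (I : Finset ι) :
    liftOpNorm V I = sSup (redSet V I) := by
  unfold liftOpNorm redSet
  congr 1
  ext r
  constructor
  · rintro ⟨p, z, ⟨hzV, hagree, hmin⟩, rfl⟩
    have hperp : ∀ u ∈ Wres V I, dot z u = 0 := by
      intro u hu
      have hkey : ∀ s : ℝ, 0 ≤ sq2 u * s ^ 2 + (2 * dot z u) * s := by
        intro s
        have hmem : z + s • u ∈ V := V.add_mem hzV (V.smul_mem s (mem_Wres.mp hu).1)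
        have hag : ∀ i ∈ I, (z + s • u) i = p i := by
          intro i hi
          simp only [Pi.add_apply, Pi.smul_apply, smul_eq_mul, (mem_Wres.mp hu).2 i hi,
            mul_zero, add_zero]
          exact hagree i hi
        have h1 := hmin (z + s • u) hmem hag
        rw [norm2_eq, norm2_eq] at h1
        have h2 : sq2 z ≤ sq2 (z + s • u) :=
          (Real.sqrt_le_sqrt_iff (sq2_nonneg _)).mp h1
        rw [sq2_add, dot_smul_right, sq2_smul] at h2
        nlinarith [h2]
      have := quad_nonneg_linear_eq_zero hkey
      linarith
    refine ⟨z, ⟨hzV, fun u hu => by show dot u z = 0; rw [dot_comm]; exact hperp u hu⟩, ?_⟩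
    have : ∑ i ∈ I, p i ^ 2 = sqS I z := by
      unfold sqS
      exact Finset.sum_congr rfl fun i hi => by rw [hagree i hi]
    rw [this]
  · rintro ⟨z, hz, rfl⟩
    refine ⟨z, z, ⟨hz.1, fun i _ => rfl, ?_⟩, rfl⟩
    intro z' hz' hag
    set u : ι → ℝ := z' - z with hu
    have hures : u ∈ Wres V I := mem_Wres.mpr ⟨V.sub_mem hz' hz.1, fun i hi => by
      simp [hu, hag i hi]⟩
    have hdzu : dot z u = 0 := Wred_perp hz u hures
    have : sq2 z' = sq2 z + sq2 u := by
      have : z' = z + u := by rw [hu]; ring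
      rw [this, sq2_add, hdzu]
      ring
    rw [norm2_eq, norm2_eq]
    apply Real.sqrt_le_sqrt
    have := sq2_nonneg u
    linarith

lemma zero_mem_redSet (V : Submodule ℝ (ι → ℝ)) (I : Finset ι) : (0 : ℝ) ∈ redSet V I :=
  ⟨0, Submodule.zero_mem _, by simp [norm2_eq, sq2, sqS]⟩

lemma continuous_sq2 : Continuous (sq2 : (ι → ℝ) → ℝ) :=
  continuous_finset_sum _ fun i _ => (continuous_apply i).pow 2

lemma continuous_sqS (I : Finset ι) : Continuous (sqS I : (ι → ℝ) → ℝ) :=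
  continuous_finset_sum _ fun i _ => (continuous_apply i).pow 2

lemma exists_max (V : Submodule ℝ (ι → ℝ)) (I : Finset ι) (hne : Wred V I ≠ ⊥) :
    ∃ z ∈ Wred V I, z ≠ 0 ∧ ∀ w ∈ Wred V I, sq2 w * sqS I z ≤ sq2 z * sqS I w := by
  classical
  set S : Set (ι → ℝ) := {z | z ∈ Wred V I ∧ sq2 z = 1} with hS
  have hclosed : IsClosed S := by
    have h1 : IsClosed ((Wred V I : Set (ι → ℝ))) :=
      Submodule.closed_of_finiteDimensional _
    have h2 : IsClosed {z : ι → ℝ | sq2 z = 1} := isClosed_eq continuous_sq2 continuous_const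
    exact h1.inter h2
  have hsub : S ⊆ Metric.closedBall 0 1 := by
    intro z hz
    rw [Metric.mem_closedBall, dist_zero_right]
    rw [pi_norm_le_iff_of_nonneg (by norm_num)]
    intro i
    rw [Real.norm_eq_abs]
    have h1 : z i ^ 2 ≤ 1 := by
      have : z i ^ 2 ≤ sq2 z := Finset.single_le_sum (f := fun i => z i ^ 2)
        (fun i _ => sq_nonneg _) (Finset.mem_univ i)
      rw [hz.2] at this
      exact this
    nlinarith [abs_nonneg (z i), sq_abs (z i)]
  have hcompact : IsCompact S :=
    IsCompact.of_isClosed_subset (isCompact_closedBall 0 1) hclosed hsub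
  have hSne : S.Nonempty := by
    obtain ⟨z₀, hz₀, hz₀0⟩ := Submodule.ne_bot_iff _ |>.mp hne
    have hpos : 0 < sq2 z₀ := sq2_pos hz₀0
    set c : ℝ := (Real.sqrt (sq2 z₀))⁻¹ with hc
    refine ⟨c • z₀, Submodule.smul_mem _ c hz₀, ?_⟩
    rw [sq2_smul, hc]
    rw [inv_pow, Real.sq_sqrt (le_of_lt hpos)]
    field_simp
  obtain ⟨z, hzS, hzmin⟩ := hcompact.exists_isMinOn hSne (continuous_sqS I).continuousOn
  have hz2 : sq2 z = 1 := hzS.2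
  have hzne : z ≠ 0 := by
    intro h0
    rw [h0] at hz2
    simp [sq2] at hz2
  refine ⟨z, hzS.1, hzne, ?_⟩
  intro w hw
  by_cases hw0 : w = 0
  · rw [hw0]
    simp [sq2, sqS]
  · have hwpos : 0 < sq2 w := sq2_pos hw0
    set c : ℝ := (Real.sqrt (sq2 w))⁻¹ with hc
    have hcw : c • w ∈ S := by
      refine ⟨Submodule.smul_mem _ c hw, ?_⟩
      rw [sq2_smul, hc, inv_pow, Real.sq_sqrt (le_of_lt hwpos)]
      field_simp
    have hmin := hzmin hcw
    have h1 : sqS I z ≤ sqS I (c • w) := hmin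
    rw [sqS_smul, hc, inv_pow, Real.sq_sqrt (le_of_lt hwpos)] at h1
    have h2 : sq2 w * sqS I z ≤ sqS I w := by
      have h3 := mul_le_mul_of_nonneg_left h1 (le_of_lt hwpos)
      rwa [mul_inv_cancel_left₀ (ne_of_gt hwpos)] at h3
    calc sq2 w * sqS I z ≤ sqS I w := h2
      _ = sq2 z * sqS I w := by rw [hzS.2, one_mul]

lemma stationary {V : Submodule ℝ (ι → ℝ)} {I : Finset ι} {z : ι → ℝ}
    (hz : z ∈ Wred V I)
    (hmax : ∀ w ∈ Wred V I, sq2 w * sqS I z ≤ sq2 z * sqS I w) :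
    ∀ w ∈ V, sqS I z * dot z w = sq2 z * dotS I z w := by
  have hred : ∀ w ∈ Wred V I, sqS I z * dot z w = sq2 z * dotS I z w := by
    intro w hw
    have hkey : ∀ s : ℝ,
        (sq2 w * sqS I z - sq2 z * sqS I w) * s ^ 2 +
          (2 * (dot z w * sqS I z - sq2 z * dotS I z w)) * s ≤ 0 := by
      intro s
      have hmem : z + s • w ∈ Wred V I := Submodule.add_mem _ hz (Submodule.smul_mem _ s hw)
      have h1 := hmax (z + s • w) hmem
      rw [sq2_add, sqS_add, dot_smul_right, dotS_smul_right, sq2_smul, sqS_smul] at h1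
      nlinarith [h1]
    have := quad_nonpos_linear_eq_zero hkey
    linarith
  intro w hwV
  obtain ⟨a, haK, hperp⟩ := exists_proj (Wres V I) w
  have hwa : w - a ∈ Wred V I := by
    refine ⟨V.sub_mem hwV (mem_Wres.mp haK).1, fun u hu => ?_⟩
    show dot u (w - a) = 0
    rw [dot_comm]
    exact hperp u hu
  have heq1 := hred (w - a) hwa
  have hza : dot z a = 0 := Wred_perp hz a haK
  have hdsa : dotS I z a = 0 := by
    unfold dotS
    apply Finset.sum_eq_zero
    intro i hi
    rw [(mem_Wres.mp haK).2 i hi, mul_zero]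
  have hw' : w = (w - a) + a := by ring
  rw [hw', dot_add_right]
  have hdsplit : dotS I z ((w - a) + a) = dotS I z (w - a) + dotS I z a := by
    unfold dotS
    rw [← Finset.sum_add_distrib]
    exact Finset.sum_congr rfl fun i _ => by simp only [Pi.add_apply]; ring
  rw [hdsplit, hza, hdsa]
  ring_nf
  ring_nf at heq1
  linarith [heq1]

end SelfDualAux
namespace SelfDualAux
set_option linter.unusedSectionVars false
set_option linter.unusedVariables false
variable {ι : Type*} [Fintype ι] [DecidableEq ι]

lemma dual_element {V : Submodule ℝ (ι → ℝ)} {I : Finset ι} {z : ι → ℝ}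
    (hz : z ∈ Wred V I) (hz0 : z ≠ 0)
    (hstat : ∀ w ∈ V, sqS I z * dot z w = sq2 z * dotS I z w) :
    (fun i => if i ∈ I then (sq2 z - sqS I z) * z i else -(sqS I z * z i)) ∈
        Wred (orthComp V) Iᶜ ∧
      sqS Iᶜ (fun i => if i ∈ I then (sq2 z - sqS I z) * z i else -(sqS I z * z i))
        = sqS I z ^ 2 * (sq2 z - sqS I z) ∧
      sq2 (fun i => if i ∈ I then (sq2 z - sqS I z) * z i else -(sqS I z * z i))
        = sqS I z * (sq2 z - sqS I z) * sq2 z := by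
  classical
  set y : ι → ℝ := fun i => if i ∈ I then (sq2 z - sqS I z) * z i else -(sqS I z * z i)
    with hy
  have hcompl : ∀ x : ι → ℝ, ∑ i ∈ Iᶜ, z i * x i = dot z x - dotS I z x := by
    intro x
    have := Finset.sum_add_sum_compl I (fun i => z i * x i)
    have hd : dot z x = ∑ i : ι, z i * x i := rfl
    have hds : dotS I z x = ∑ i ∈ I, z i * x i := rfl
    rw [hd, hds]
    linarith [this]
  have hdot : ∀ x : ι → ℝ, dot x y = sq2 z * dotS I z x - sqS I z * dot z x := by
    intro x
    have hsplit : dot x y = ∑ i ∈ I, x i * y i + ∑ i ∈ Iᶜ, x i * y i :=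
      (Finset.sum_add_sum_compl I _).symm
    have h1 : ∑ i ∈ I, x i * y i = (sq2 z - sqS I z) * dotS I z x := by
      rw [dotS, Finset.mul_sum]
      apply Finset.sum_congr rfl
      intro i hi
      simp only [hy, if_pos hi]
      ring
    have h2 : ∑ i ∈ Iᶜ, x i * y i = -(sqS I z) * ∑ i ∈ Iᶜ, z i * x i := by
      rw [Finset.mul_sum]
      apply Finset.sum_congr rfl
      intro i hi
      have hni : i ∉ I := Finset.mem_compl.mp hi
      simp only [hy, if_neg hni]
      ring
    rw [hsplit, h1, h2, hcompl x]
    ring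
  refine ⟨⟨?_, ?_⟩, ?_, ?_⟩
  · -- y ∈ orthComp V
    intro x hx
    show dot x y = 0
    rw [hdot x]
    have := hstat x hx
    linarith
  · -- y ∈ orthComp (Wres (orthComp V) Iᶜ)
    intro u hu
    show dot u y = 0
    obtain ⟨huV, huI⟩ := mem_Wres.mp hu
    have hzu : dot z u = 0 := huV z (Wred_le hz)
    have hcs : ∑ i ∈ Iᶜ, z i * u i = 0 := by
      apply Finset.sum_eq_zero
      intro i hi
      rw [huI i hi, mul_zero]
    have hdsu : dotS I z u = 0 := by
      have := hcompl u
      rw [hzu, hcs] at this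
      linarith
    rw [hdot u, hzu, hdsu]
    ring
  · -- sqS Iᶜ y
    have h1 : ∑ i ∈ Iᶜ, y i ^ 2 = sqS I z ^ 2 * ∑ i ∈ Iᶜ, z i ^ 2 := by
      rw [Finset.mul_sum]
      apply Finset.sum_congr rfl
      intro i hi
      have hni : i ∉ I := Finset.mem_compl.mp hi
      simp only [hy, if_neg hni]
      ring
    have h2 : ∑ i ∈ Iᶜ, z i ^ 2 = sq2 z - sqS I z := by
      have := sq2_split I z
      linarith
    show (∑ i ∈ Iᶜ, y i ^ 2) = sqS I z ^ 2 * (sq2 z - sqS I z)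
    rw [h1, h2]
  · -- sq2 y
    have hs : sq2 y = ∑ i ∈ I, y i ^ 2 + ∑ i ∈ Iᶜ, y i ^ 2 :=
      (Finset.sum_add_sum_compl I _).symm
    have h1 : ∑ i ∈ I, y i ^ 2 = (sq2 z - sqS I z) ^ 2 * ∑ i ∈ I, z i ^ 2 := by
      rw [Finset.mul_sum]
      apply Finset.sum_congr rfl
      intro i hi
      simp only [hy, if_pos hi]
      ring
    have h2 : ∑ i ∈ Iᶜ, y i ^ 2 = sqS I z ^ 2 * ∑ i ∈ Iᶜ, z i ^ 2 := by
      rw [Finset.mul_sum]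
      apply Finset.sum_congr rfl
      intro i hi
      have hni : i ∉ I := Finset.mem_compl.mp hi
      simp only [hy, if_neg hni]
      ring
    have h3 : ∑ i ∈ Iᶜ, z i ^ 2 = sq2 z - sqS I z := by
      have := sq2_split I z
      linarith
    have h4 : (∑ i ∈ I, z i ^ 2) = sqS I z := rfl
    rw [hs, h1, h2, h3, h4]
    ring

lemma redSet_isGreatest (V : Submodule ℝ (ι → ℝ)) (I : Finset ι) (hne : Wred V I ≠ ⊥) :
    ∃ z ∈ Wred V I, z ≠ 0 ∧ (∀ w ∈ Wred V I, sq2 w * sqS I z ≤ sq2 z * sqS I w) ∧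
      IsGreatest (redSet V I) (norm2 z / Real.sqrt (sqS I z)) := by
  obtain ⟨z, hz, hz0, hmax⟩ := exists_max V I hne
  refine ⟨z, hz, hz0, hmax, ⟨z, hz, rfl⟩, ?_⟩
  rintro r ⟨w, hw, rfl⟩
  by_cases hw0 : w = 0
  · subst hw0
    have : norm2 (0 : ι → ℝ) = 0 := by simp [norm2_eq, sq2]
    rw [this, zero_div]
    exact div_nonneg (Real.sqrt_nonneg _) (Real.sqrt_nonneg _)
  · have hpz := sqS_pos_of_Wred hz hz0
    have hpw := sqS_pos_of_Wred hw hw0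
    rw [norm2_eq, norm2_eq,
      div_le_div_iff₀ (Real.sqrt_pos.mpr hpw) (Real.sqrt_pos.mpr hpz),
      ← Real.sqrt_mul (sq2_nonneg w), ← Real.sqrt_mul (sq2_nonneg z)]
    exact Real.sqrt_le_sqrt (hmax w hw)

lemma redSet_bddAbove (V : Submodule ℝ (ι → ℝ)) (I : Finset ι) : BddAbove (redSet V I) := by
  by_cases h : Wred V I = ⊥
  · have hsub : redSet V I ⊆ {0} := by
      rintro r ⟨w, hw, rfl⟩
      rw [h] at hw
      have : w = 0 := by simpa using hw
      subst this
      simp [norm2_eq, sq2]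
    exact ((Set.finite_singleton 0).subset hsub).bddAbove
  · obtain ⟨z, _, _, _, hG⟩ := redSet_isGreatest V I h
    exact ⟨_, hG.2⟩

lemma liftOpNorm_bot {V : Submodule ℝ (ι → ℝ)} {I : Finset ι} (h : Wred V I = ⊥) :
    liftOpNorm V I = 0 := by
  rw [liftOpNorm_eq]
  have heq : redSet V I = {0} := by
    apply le_antisymm
    · rintro r ⟨w, hw, rfl⟩
      rw [h] at hw
      have : w = 0 := by simpa using hw
      subst this
      simp [norm2_eq, sq2]
    · rintro r hr
      rw [Set.mem_singleton_iff] at hr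
      exact hr ▸ zero_mem_redSet V I
  rw [heq, csSup_singleton]

lemma liftOpNorm_univ [Nonempty ι] (V : Submodule ℝ (ι → ℝ)) (hV : V ≠ ⊥) :
    liftOpNorm V (Finset.univ : Finset ι) = 1 := by
  have hWres : Wres V Finset.univ = ⊥ := by
    rw [eq_bot_iff]
    intro x hx
    have := (mem_Wres.mp hx).2
    have hx0 : x = 0 := funext fun i => this i (Finset.mem_univ i)
    simp [hx0]
  have hWred : Wred V Finset.univ = V := by
    unfold Wred
    rw [hWres, orthComp_bot, inf_top_eq]
  obtain ⟨z, hz, hz0, hmax, hG⟩ := redSet_isGreatest V Finset.univ (by rw [hWred]; exact hV)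
  rw [liftOpNorm_eq, hG.csSup_eq]
  have hsq : sqS (Finset.univ : Finset ι) z = sq2 z := rfl
  rw [norm2_eq, hsq]
  exact div_self (ne_of_gt (Real.sqrt_pos.mpr (sq2_pos hz0)))

noncomputable def chiSet (V : Submodule ℝ (ι → ℝ)) : Set ℝ :=
  {r | ∃ I : Finset ι, I.Nonempty ∧ r = liftOpNorm V I}

lemma chiBar_eq (V : Submodule ℝ (ι → ℝ)) : chiBar V = sSup (chiSet V) := rfl

lemma chiSet_bddAbove (V : Submodule ℝ (ι → ℝ)) : BddAbove (chiSet V) := by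
  have hsub : chiSet V ⊆ (fun I : Finset ι => liftOpNorm V I) '' Set.univ := by
    rintro r ⟨I, _, rfl⟩
    exact ⟨I, trivial, rfl⟩
  exact ((Set.finite_univ.image _).subset hsub).bddAbove

lemma one_le_chiBar [Nonempty ι] (V : Submodule ℝ (ι → ℝ)) (hV : V ≠ ⊥) : 1 ≤ chiBar V :=
  le_csSup (chiSet_bddAbove V)
    ⟨Finset.univ, Finset.univ_nonempty, (liftOpNorm_univ V hV).symm⟩

lemma chiBar_le_dual [Nonempty ι] (V : Submodule ℝ (ι → ℝ)) (hV : V ≠ ⊥)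
    (hVd : orthComp V ≠ ⊥) : chiBar V ≤ chiBar (orthComp V) := by
  classical
  rw [chiBar_eq]
  refine csSup_le ⟨liftOpNorm V Finset.univ, Finset.univ, Finset.univ_nonempty, rfl⟩ ?_
  rintro r ⟨I, hIne, rfl⟩
  by_cases hbot : Wred V I = ⊥
  · rw [liftOpNorm_bot hbot]
    exact le_trans zero_le_one (one_le_chiBar _ hVd)
  obtain ⟨z, hz, hz0, hmax, hG⟩ := redSet_isGreatest V I hbot
  rw [liftOpNorm_eq, hG.csSup_eq]
  have hpz : 0 < sqS I z := sqS_pos_of_Wred hz hz0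
  by_cases hlam : sq2 z ≤ sqS I z
  · refine le_trans ?_ (one_le_chiBar _ hVd)
    rw [norm2_eq, div_le_one (Real.sqrt_pos.mpr hpz)]
    exact Real.sqrt_le_sqrt hlam
  · push_neg at hlam
    have hstat := stationary hz hmax
    obtain ⟨hyW, hysqS, hysq2⟩ := dual_element hz hz0 hstat
    set y : ι → ℝ := fun i => if i ∈ I then (sq2 z - sqS I z) * z i else -(sqS I z * z i)
      with hy
    have hD : 0 < sq2 z - sqS I z := by linarith
    have hsqSy : 0 < sqS Iᶜ y := by rw [hysqS]; exact mul_pos (pow_pos hpz 2) hD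
    have hy0 : y ≠ 0 := by
      intro h0
      rw [h0] at hsqSy
      simp [sqS] at hsqSy
    have hJne : (Iᶜ : Finset ι).Nonempty := by
      rcases Finset.eq_empty_or_nonempty (Iᶜ : Finset ι) with he | hne'
      · rw [he] at hsqSy
        simp [sqS] at hsqSy
      · exact hne'
    have hval : norm2 z / Real.sqrt (sqS I z) = norm2 y / Real.sqrt (sqS Iᶜ y) := by
      have hy2pos : 0 < sq2 y := by rw [hysq2]; exact mul_pos (mul_pos hpz hD) (sq2_pos hz0)
      rw [norm2_eq, norm2_eq,
        div_eq_div_iff (ne_of_gt (Real.sqrt_pos.mpr hpz))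
          (ne_of_gt (Real.sqrt_pos.mpr hsqSy)),
        ← Real.sqrt_mul (sq2_nonneg z), ← Real.sqrt_mul (sq2_nonneg y)]
      congr 1
      rw [hysq2, hysqS]
      ring
    rw [hval]
    have h1 : norm2 y / Real.sqrt (sqS Iᶜ y) ≤ liftOpNorm (orthComp V) Iᶜ := by
      rw [liftOpNorm_eq]
      exact le_csSup (redSet_bddAbove _ _) ⟨y, hyW, rfl⟩
    exact le_trans h1 (le_csSup (chiSet_bddAbove _) ⟨Iᶜ, hJne, rfl⟩)

end SelfDualAux

/-- self-duality: for `{0} ≠ W ≠ ℝ^n`, `κ_W = κ_{W^⊥}` and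
`χ̄_W = χ̄_{W^⊥}`. -/
theorem kappa_chiBar_self_dual {n : ℕ} (W : Submodule ℝ (Fin n → ℝ))
    (hW0 : W ≠ ⊥) (hWtop : W ≠ ⊤) :
    kappa W = kappa (orthComp W) ∧ chiBar W = chiBar (orthComp W) := by
  classical
  refine ⟨SelfDualAux.kappa_self_dual W, ?_⟩
  have hn : Nonempty (Fin n) := by
    rcases Nat.eq_zero_or_pos n with h0 | hpos
    · exfalso
      subst h0
      apply hW0
      rw [eq_bot_iff]
      intro x hx
      have hx0 : x = 0 := Subsingleton.elim x 0
      simp [hx0]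
    · exact ⟨⟨0, hpos⟩⟩
  have hd0 : orthComp W ≠ ⊥ := fun h =>
    hWtop (by rw [← SelfDualAux.orthComp_orthComp W, h, SelfDualAux.orthComp_bot])
  have h1 := SelfDualAux.chiBar_le_dual W hW0 hd0
  have h2 := SelfDualAux.chiBar_le_dual (orthComp W) hd0
    (by rw [SelfDualAux.orthComp_orthComp]; exact hW0)
  rw [SelfDualAux.orthComp_orthComp] at h2
  exact le_antisymm h1 h2
end

section
/- (Hoffman Proximity Theorem) Let W ⊆ ℝ^n be a linear subspace, ℓ ∈ (ℝ ∪ {−∞})^n and u ∈ (ℝ ∪ {+∞})^n lower and upper bounds, and assume P = {x ∈ W : ℓ ≤ x ≤ u} is nonempty. Define ℓ⁺ ∈ ℝ^n by ℓ⁺_i = max(ℓ_i, 0) (with ℓ⁺_i = 0 if ℓ_i = −∞) and u⁻ ∈ ℝ^n by u⁻_i = max(−u_i, 0) (with u⁻_i = 0 if u_i = +∞), and let Λ(u,ℓ) = supp(u⁻) ∪ supp(ℓ⁺). Then: (i) for every x ∈ P, ‖ℓ⁺ + u⁻‖₁ ≤ ‖x_{Λ(u,ℓ)}‖₁; and (ii)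 there exists x ∈ P such that ‖x‖_∞ ≤ κ_W ‖ℓ⁺ + u⁻‖₁. -/
open scoped BigOperators

variable {ι : Type*} [Fintype ι] [DecidableEq ι]

set_option linter.unusedSectionVars false

lemma mem_coordSubspace {C : Set ι} {x : ι → ℝ} (h : {i | x i ≠ 0} ⊆ C) :
    x ∈ coordSubspace C := by
  intro i hi
  by_contra hx
  exact hi (h hx)

lemma csSup_smul_fin {k : ℝ} (hk : 0 ≤ k) {A : Set ℝ} (hne : A.Nonempty) (hfin : A.Finite) :
    sSup ((fun y => k * y) '' A) = k * sSup A := by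
  apply le_antisymm
  · apply csSup_le (hne.image _)
    rintro y ⟨a, ha, rfl⟩
    exact mul_le_mul_of_nonneg_left (le_csSup hfin.bddAbove ha) hk
  · exact le_csSup (hfin.image _).bddAbove ⟨sSup A, hne.csSup_mem hfin, rfl⟩

lemma csInf_smul_fin {k : ℝ} (hk : 0 ≤ k) {A : Set ℝ} (hne : A.Nonempty) (hfin : A.Finite) :
    sInf ((fun y => k * y) '' A) = k * sInf A := by
  apply le_antisymm
  · exact csInf_le (hfin.image _).bddBelow ⟨sInf A, hne.csInf_mem hfin, rfl⟩
  · apply le_csInf (hne.image _)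
    rintro y ⟨a, ha, rfl⟩
    exact mul_le_mul_of_nonneg_left (csInf_le hfin.bddBelow ha) hk

lemma ratio_eq (W : Submodule ℝ (ι → ℝ)) {C : Set ι} (hC : IsCircuit W C)
    {g g' : ι → ℝ} (hg : g ∈ W) (hg0 : g ≠ 0) (hs : {i | g i ≠ 0} = C)
    (hg' : g' ∈ W) (hg0' : g' ≠ 0) (hs' : {i | g' i ≠ 0} = C) :
    sSup ((fun i => |g' i|) '' C) / sInf ((fun i => |g' i|) '' C)
      = sSup ((fun i => |g i|) '' C) / sInf ((fun i => |g i|) '' C) := by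
  have hgV : g ∈ W ⊓ coordSubspace C := ⟨hg, mem_coordSubspace hs.le⟩
  have hspan : Submodule.span ℝ {g} ≤ W ⊓ coordSubspace C := by
    rw [Submodule.span_le, Set.singleton_subset_iff]; exact hgV
  have heq : Submodule.span ℝ {g} = W ⊓ coordSubspace C :=
    Submodule.eq_of_le_of_finrank_eq hspan (by rw [finrank_span_singleton hg0, hC.1])
  have hg'V : g' ∈ Submodule.span ℝ {g} := heq ▸ ⟨hg', mem_coordSubspace hs'.le⟩
  obtain ⟨c, hc⟩ := Submodule.mem_span_singleton.mp hg'V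
  have hc0 : c ≠ 0 := by rintro rfl; exact hg0' (by simpa using hc.symm)
  have himg : (fun i => |g' i|) '' C = (fun y => |c| * y) '' ((fun i => |g i|) '' C) := by
    rw [Set.image_image]
    apply Set.image_congr
    intro i _
    rw [← hc]
    simp [abs_mul]
  have hne : ((fun i => |g i|) '' C).Nonempty := by
    obtain ⟨i, hi⟩ := Function.ne_iff.mp hg0
    exact ⟨|g i|, ⟨i, hs ▸ hi, rfl⟩⟩
  rw [himg, csSup_smul_fin (abs_nonneg c) hne (Set.toFinite _),
    csInf_smul_fin (abs_nonneg c) hne (Set.toFinite _),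
    mul_div_mul_left _ _ (abs_ne_zero.mpr hc0)]

lemma kappaSet_bddAbove (W : Submodule ℝ (ι → ℝ)) :
    BddAbove ({1} ∪ {r | ∃ C : Set ι, IsCircuit W C ∧ ∃ g ∈ W, g ≠ 0 ∧ {i | g i ≠ 0} = C ∧
      r = sSup ((fun i => |g i|) '' C) / sInf ((fun i => |g i|) '' C)}) := by
  classical
  apply Set.Finite.bddAbove
  apply Set.Finite.union (Set.finite_singleton _)
  set F : Set ι → ℝ := fun C =>
    if h : ∃ g, g ∈ W ∧ g ≠ 0 ∧ {i | g i ≠ 0} = C then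
      sSup ((fun i => |h.choose i|) '' C) / sInf ((fun i => |h.choose i|) '' C)
    else 0 with hF
  apply Set.Finite.subset (Set.finite_univ.image F)
  rintro r ⟨C, hC, g, hgW, hg0, hsupp, rfl⟩
  refine ⟨C, Set.mem_univ _, ?_⟩
  have h : ∃ g, g ∈ W ∧ g ≠ 0 ∧ {i | g i ≠ 0} = C := ⟨g, hgW, hg0, hsupp⟩
  rw [hF]
  simp only [dif_pos h]
  exact ratio_eq W hC hgW hg0 hsupp h.choose_spec.1 h.choose_spec.2.1 h.choose_spec.2.2

lemma one_le_kappa (W : Submodule ℝ (ι → ℝ)) : 1 ≤ kappa W :=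
  le_csSup (kappaSet_bddAbove W) (Or.inl rfl)

lemma kappa_nonneg (W : Submodule ℝ (ι → ℝ)) : 0 ≤ kappa W :=
  le_trans zero_le_one (one_le_kappa W)

lemma elementary_comparable (W : Submodule ℝ (ι → ℝ)) {g : ι → ℝ}
    (hgW : g ∈ W) (hg0 : g ≠ 0) (hC : IsCircuit W {i | g i ≠ 0}) :
    ∀ i j, g j ≠ 0 → |g i| ≤ kappa W * |g j| := by
  intro i j hj
  set C := {i | g i ≠ 0} with hCdef
  set A := (fun i => |g i|) '' C with hA
  have hAfin : A.Finite := Set.toFinite _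
  have hAne : A.Nonempty := by
    obtain ⟨i', hi'⟩ := Function.ne_iff.mp hg0
    exact ⟨|g i'|, ⟨i', hi', rfl⟩⟩
  have hApos : ∀ y ∈ A, 0 < y := by rintro y ⟨i', hi', rfl⟩; exact abs_pos.mpr hi'
  have hInfpos : 0 < sInf A := hApos _ (hAne.csInf_mem hAfin)
  have hr : sSup A / sInf A ≤ kappa W :=
    le_csSup (kappaSet_bddAbove W) (Or.inr ⟨C, hC, g, hgW, hg0, rfl, rfl⟩)
  have hSup : sSup A ≤ kappa W * sInf A := (div_le_iff₀ hInfpos).mp hr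
  have h1 : |g i| ≤ sSup A := by
    by_cases hgi : g i = 0
    · rw [hgi, abs_zero]
      exact le_of_lt (hApos _ (hAne.csSup_mem hAfin))
    · exact le_csSup hAfin.bddAbove ⟨i, hgi, rfl⟩
  have h2 : sInf A ≤ |g j| := csInf_le hAfin.bddBelow ⟨j, hj, rfl⟩
  calc |g i| ≤ sSup A := h1
    _ ≤ kappa W * sInf A := hSup
    _ ≤ kappa W * |g j| := mul_le_mul_of_nonneg_left h2 (kappa_nonneg W)

/-- a nonzero vector of `W` with minimal support has circuit support -/
lemma minimal_isCircuit (W : Submodule ℝ (ι → ℝ)) {g : ι → ℝ} (hgW : g ∈ W) (hg0 : g ≠ 0)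
    (hmin : ∀ h ∈ W, h ≠ 0 → {i | h i ≠ 0} ⊆ {i | g i ≠ 0} → {i | h i ≠ 0} = {i | g i ≠ 0}) :
    IsCircuit W {i | g i ≠ 0} := by
  set C := {i | g i ≠ 0} with hC
  have hgV : g ∈ W ⊓ coordSubspace C := ⟨hgW, mem_coordSubspace subset_rfl⟩
  have hVspan : W ⊓ coordSubspace C = Submodule.span ℝ {g} := by
    apply le_antisymm
    · intro h hh
      by_cases hh0 : h = 0
      · simp [hh0]
      · have hsub : {i | h i ≠ 0} ⊆ C := fun i hi => by
          by_contra hc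
          exact hi (hh.2 i hc)
        have hsupp := hmin h hh.1 hh0 hsub
        obtain ⟨j, hj0'⟩ := Function.ne_iff.mp hg0
        have hj : g j ≠ 0 := by simpa using hj0'
        have hhj : h j ≠ 0 := by
          have : j ∈ {i | h i ≠ 0} := hsupp ▸ (show j ∈ C from hj)
          exact this
        have hmem : g j • h - h j • g ∈ W := W.sub_mem (W.smul_mem _ hh.1) (W.smul_mem _ hgW)
        have hj0 : (g j • h - h j • g) j = 0 := by simp [mul_comm]
        by_cases hz : g j • h - h j • g = 0
        · have : g j • h = h j • g := by rwa [sub_eq_zero] at hz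
          rw [Submodule.mem_span_singleton]
          refine ⟨h j / g j, ?_⟩
          have := congrArg (fun v => (g j)⁻¹ • v) this
          simp only [smul_smul, inv_mul_cancel₀ hj, one_smul] at this
          rw [div_eq_inv_mul]; exact this.symm
        · exfalso
          have hsub2 : {i | (g j • h - h j • g) i ≠ 0} ⊆ C := by
            intro i hi
            simp only [Set.mem_setOf_eq, Pi.sub_apply, Pi.smul_apply, smul_eq_mul] at hi
            by_contra hc
            have hgi : g i = 0 := by simpa [hC] using hc
            have hhi : h i = 0 := by
              by_contra hne; exact hc (hsub hne)
            simp [hgi, hhi] at hi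
          have := hmin _ hmem hz hsub2
          have : j ∈ {i | (g j • h - h j • g) i ≠ 0} := by rw [this]; exact hj
          exact this hj0
    · rw [Submodule.span_le, Set.singleton_subset_iff]; exact hgV
  constructor
  · rw [hVspan]; exact finrank_span_singleton hg0
  · intro C' hC' h1
    have : Nontrivial ↥(W ⊓ coordSubspace C') := by
      apply Module.nontrivial_of_finrank_pos (R := ℝ)
      omega
    obtain ⟨⟨v, hv⟩, ⟨w, hw⟩, hvw⟩ := this
    -- one of v, w is nonzero
    have hex : ∃ v : ι → ℝ, v ∈ W ⊓ coordSubspace C' ∧ v ≠ 0 := by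
      by_cases hv0 : v = 0
      · refine ⟨w, hw, ?_⟩
        intro h0
        exact hvw (by simp [Subtype.ext_iff, hv0, h0])
      · exact ⟨v, hv, hv0⟩
    obtain ⟨v, ⟨hvW, hvC⟩, hv0⟩ := hex
    have hvsub : {i | v i ≠ 0} ⊆ C' := fun i hi => by
      by_contra hc; exact hi (hvC i hc)
    have hvsubC : {i | v i ≠ 0} ⊆ C := hvsub.trans hC'.1
    have := hmin v hvW hv0 hvsubC
    rw [← this] at hC'
    exact hC'.2 hvsub



lemma pos_mul_trans {a b c : ℝ} (h1 : 0 < a * b) (h2 : 0 < b * c) : 0 < a * c := by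
  rcases lt_trichotomy b 0 with hb | hb | hb
  · have ha : a < 0 := by nlinarith
    have hc : c < 0 := by nlinarith
    exact mul_pos_of_neg_of_neg ha hc
  · rw [hb] at h1; simp at h1
  · have ha : 0 < a := by nlinarith
    have hc : 0 < c := by nlinarith
    exact mul_pos ha hc

lemma div_pos_of_mul_pos {a b : ℝ} (h : 0 < b * a) : 0 < a / b := by
  rcases mul_pos_iff.mp h with ⟨hb, ha⟩ | ⟨hb, ha⟩
  · exact div_pos ha hb
  · exact div_pos_of_neg_of_neg ha hb

lemma ncard_pos_of_ne_zero {x : ι → ℝ} (hx : x ≠ 0) : 0 < {i | x i ≠ 0}.ncard := by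
  obtain ⟨i, hi⟩ := Function.ne_iff.mp hx
  exact Set.ncard_pos (Set.toFinite _) |>.mpr ⟨i, by simpa using hi⟩

lemma exists_minimal_aux (W : Submodule ℝ (ι → ℝ)) :
    ∀ N : ℕ, ∀ x ∈ W, x ≠ 0 → {i | x i ≠ 0}.ncard ≤ N →
    ∃ g ∈ W, g ≠ 0 ∧ {i | g i ≠ 0} ⊆ {i | x i ≠ 0} ∧
      ∀ h ∈ W, h ≠ 0 → {i | h i ≠ 0} ⊆ {i | g i ≠ 0} → {i | h i ≠ 0} = {i | g i ≠ 0} := by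
  intro N
  induction N with
  | zero =>
    intro x hx hx0 hcard
    have := ncard_pos_of_ne_zero hx0
    omega
  | succ N ih =>
    intro x hx hx0 hcard
    by_cases hm : ∀ h ∈ W, h ≠ 0 → {i | h i ≠ 0} ⊆ {i | x i ≠ 0} → {i | h i ≠ 0} = {i | x i ≠ 0}
    · exact ⟨x, hx, hx0, subset_rfl, hm⟩
    · push_neg at hm
      obtain ⟨h, hhW, hh0, hsub, hne⟩ := hm
      have hlt : {i | h i ≠ 0}.ncard < {i | x i ≠ 0}.ncard :=
        Set.ncard_lt_ncard (ssubset_of_subset_of_ne hsub hne) (Set.toFinite _)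
      obtain ⟨g, hgW, hg0, hgsub, hgmin⟩ := ih h hhW hh0 (by omega)
      exact ⟨g, hgW, hg0, hgsub.trans hsub, hgmin⟩

lemma exists_conformal_elementary_aux (W : Submodule ℝ (ι → ℝ)) :
    ∀ N : ℕ, ∀ x ∈ W, x ≠ 0 → {i | x i ≠ 0}.ncard ≤ N →
    ∃ g ∈ W, g ≠ 0 ∧ IsCircuit W {i | g i ≠ 0} ∧ {i | g i ≠ 0} ⊆ {i | x i ≠ 0} ∧
      ∀ i, 0 ≤ g i * x i := by
  intro N
  induction N with
  | zero =>
    intro x hx hx0 hcard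
    have := ncard_pos_of_ne_zero hx0
    omega
  | succ N ih =>
    intro x hx hx0 hcard
    obtain ⟨h, hhW, hh0, hhsub, hhmin⟩ :=
      exists_minimal_aux W (N + 1) x hx hx0 hcard
    have hcirc : IsCircuit W {i | h i ≠ 0} := minimal_isCircuit W hhW hh0 hhmin
    by_cases hall : ∀ i, 0 ≤ h i * x i
    · exact ⟨h, hhW, hh0, hcirc, hhsub, hall⟩
    by_cases hall2 : ∀ i, 0 ≤ (-h) i * x i
    · refine ⟨-h, W.neg_mem hhW, neg_ne_zero.mpr hh0, ?_, ?_, hall2⟩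
      · have : {i | (-h) i ≠ 0} = {i | h i ≠ 0} := by ext i; simp
        rw [this]; exact hcirc
      · intro i hi
        apply hhsub
        simpa using hi
    -- mixed signs
    push_neg at hall hall2
    obtain ⟨i₁, hi₁⟩ := hall
    obtain ⟨i₂, hi₂⟩ := hall2
    simp only [Pi.neg_apply, neg_mul] at hi₂
    have hi₂' : 0 < h i₂ * x i₂ := by linarith
    -- the Finset of positive-direction coordinates
    classical
    set T : Finset ι := Finset.univ.filter (fun i => 0 < h i * x i) with hT
    have hTne : T.Nonempty := ⟨i₂, by simp [hT, hi₂']⟩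
    set t : ℝ := T.inf' hTne (fun i => x i / h i) with ht
    have htpos : 0 < t := by
      rw [ht]
      refine (Finset.lt_inf'_iff hTne).mpr ?_
      intro i hi
      simp only [hT, Finset.mem_filter] at hi
      exact div_pos_of_mul_pos hi.2
    set x' : ι → ℝ := x - t • h with hx'
    have hx'W : x' ∈ W := W.sub_mem hx (W.smul_mem _ hhW)
    have hsc : ∀ i, 0 ≤ x' i * x i := by
      intro i
      have hx'i : x' i = x i - t * h i := by simp [hx']
      by_cases hhi : h i = 0
      · rw [hx'i, hhi]; ring_nf; positivity
      · rcases le_or_gt (h i * x i) 0 with hcase | hcase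
        · have h1 : 0 ≤ t * (-(h i * x i)) := mul_nonneg htpos.le (by linarith)
          rw [hx'i]; nlinarith [mul_self_nonneg (x i)]
        · have hiT : i ∈ T := by simp [hT, hcase]
          have hle : t ≤ x i / h i := Finset.inf'_le _ hiT
          have key : t * (h i * x i) ≤ (x i / h i) * (h i * x i) :=
            mul_le_mul_of_nonneg_right hle hcase.le
          have : (x i / h i) * (h i * x i) = x i * x i := by
            field_simp
          rw [hx'i]; nlinarith
    have hz : ∀ i, x i = 0 → x' i = 0 := by
      intro i hxi
      have hhi : h i = 0 := by
        by_contra hc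
        exact (hhsub hc) hxi
      simp [hx', hxi, hhi]
    have hx'0 : x' ≠ 0 := by
      intro h0
      have : x = t • h := by rwa [hx', sub_eq_zero] at h0
      rw [this] at hi₁
      simp only [Pi.smul_apply, smul_eq_mul] at hi₁
      nlinarith [mul_nonneg htpos.le (mul_self_nonneg (h i₁))]
    have hssub : {i | x' i ≠ 0} ⊂ {i | x i ≠ 0} := by
      constructor
      · intro i hi
        by_contra hc
        exact hi (hz i (by simpa using hc))
      · intro hcon
        obtain ⟨j, hjT, hjmin⟩ := Finset.exists_mem_eq_inf' hTne (fun i => x i / h i)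
        have hhj : h j ≠ 0 := by
          rw [hT] at hjT
          simp only [Finset.mem_filter] at hjT
          intro h0; rw [h0] at hjT; simp at hjT
        have hxj : x j ≠ 0 := by
          rw [hT] at hjT; simp only [Finset.mem_filter] at hjT
          intro h0; rw [h0] at hjT; simp at hjT
        have hx'j : x' j = 0 := by
          have htj : t = x j / h j := by rw [ht, hjmin]
          simp only [hx', Pi.sub_apply, Pi.smul_apply, smul_eq_mul, htj]
          field_simp
          ring
        have : j ∈ {i | x' i ≠ 0} := hcon (by exact hxj)
        exact this hx'j
    have hlt : {i | x' i ≠ 0}.ncard < {i | x i ≠ 0}.ncard :=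
      Set.ncard_lt_ncard hssub (Set.toFinite _)
    obtain ⟨g, hgW, hg0, hgcirc, hgsub, hgconf⟩ := ih x' hx'W hx'0 (by omega)
    refine ⟨g, hgW, hg0, hgcirc, hgsub.trans hssub.1, ?_⟩
    intro i
    by_cases hgi : g i = 0
    · simp [hgi]
    · have hx'i : x' i ≠ 0 := hgsub hgi
      have hxi : x i ≠ 0 := fun h0 => hx'i (hz i h0)
      have h1 : 0 < g i * x' i := lt_of_le_of_ne (hgconf i) (by
        intro h0; exact hx'i (by rcases mul_eq_zero.mp h0.symm with h|h; exact absurd h hgi; exact h))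
      have h2 : 0 < x' i * x i := lt_of_le_of_ne (hsc i) (by
        intro h0; rcases mul_eq_zero.mp h0.symm with h|h; exact hx'i h; exact hxi h)
      exact (pos_mul_trans h1 h2).le

lemma exists_conformal_decomposition (W : Submodule ℝ (ι → ℝ)) :
    ∀ N : ℕ, ∀ x ∈ W, {i | x i ≠ 0}.ncard ≤ N →
    ∃ (m : ℕ) (v : Fin m → (ι → ℝ)),
      (∀ k, v k ∈ W ∧ v k ≠ 0 ∧ IsCircuit W {i | v k i ≠ 0} ∧
        (∀ i, 0 ≤ v k i * x i) ∧ (∀ i, x i = 0 → v k i = 0)) ∧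
      x = ∑ k, v k := by
  intro N
  induction N with
  | zero =>
    intro x hx hcard
    by_cases hx0 : x = 0
    · exact ⟨0, fun k => 0, fun k => absurd k.2 (by omega), by simp [hx0]⟩
    · have := ncard_pos_of_ne_zero hx0
      omega
  | succ N ih =>
    intro x hx hcard
    by_cases hx0 : x = 0
    · exact ⟨0, fun k => 0, fun k => absurd k.2 (by omega), by simp [hx0]⟩
    obtain ⟨g, hgW, hg0, hgcirc, hgsub, hgconf⟩ :=
      exists_conformal_elementary_aux W (N + 1) x hx hx0 hcard
    classical
    set T : Finset ι := Finset.univ.filter (fun i => g i ≠ 0) with hT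
    have hTne : T.Nonempty := by
      obtain ⟨i, hi⟩ := Function.ne_iff.mp hg0
      exact ⟨i, by simp [hT]; simpa using hi⟩
    set t : ℝ := T.inf' hTne (fun i => x i / g i) with ht
    have hmulpos : ∀ i ∈ T, 0 < g i * x i := by
      intro i hi
      simp only [hT, Finset.mem_filter] at hi
      have hxi : x i ≠ 0 := fun h0 => (hgsub hi.2) h0
      exact lt_of_le_of_ne (hgconf i) (fun h0 => hxi (by
        rcases mul_eq_zero.mp h0.symm with h | h
        · exact absurd h hi.2
        · exact h))
    have htpos : 0 < t := by
      rw [ht]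
      refine (Finset.lt_inf'_iff hTne).mpr ?_
      intro i hi
      exact div_pos_of_mul_pos (hmulpos i hi)
    set x' : ι → ℝ := x - t • g with hx'
    have hx'W : x' ∈ W := W.sub_mem hx (W.smul_mem _ hgW)
    have hsc : ∀ i, 0 ≤ x' i * x i := by
      intro i
      have hx'i : x' i = x i - t * g i := by simp [hx']
      by_cases hgi : g i = 0
      · rw [hx'i, hgi]; ring_nf; positivity
      · have hiT : i ∈ T := by simp [hT, hgi]
        have hcase := hmulpos i hiT
        have hle : t ≤ x i / g i := Finset.inf'_le _ hiT
        have key : t * (g i * x i) ≤ (x i / g i) * (g i * x i) :=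
          mul_le_mul_of_nonneg_right hle hcase.le
        have : (x i / g i) * (g i * x i) = x i * x i := by field_simp
        rw [hx'i]; nlinarith
    have hz : ∀ i, x i = 0 → x' i = 0 := by
      intro i hxi
      have hgi : g i = 0 := by
        by_contra hc
        exact (hgsub hc) hxi
      simp [hx', hxi, hgi]
    have hssub : {i | x' i ≠ 0} ⊂ {i | x i ≠ 0} := by
      constructor
      · intro i hi
        by_contra hc
        exact hi (hz i (by simpa using hc))
      · intro hcon
        obtain ⟨j, hjT, hjmin⟩ := Finset.exists_mem_eq_inf' hTne (fun i => x i / g i)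
        have hgj : g j ≠ 0 := by simpa [hT] using hjT
        have hxj : x j ≠ 0 := fun h0 => (hgsub hgj) h0
        have hx'j : x' j = 0 := by
          have htj : t = x j / g j := by rw [ht, hjmin]
          simp only [hx', Pi.sub_apply, Pi.smul_apply, smul_eq_mul, htj]
          field_simp
          ring
        exact (hcon (show j ∈ {i | x i ≠ 0} from hxj)) hx'j
    have hlt : {i | x' i ≠ 0}.ncard < {i | x i ≠ 0}.ncard :=
      Set.ncard_lt_ncard hssub (Set.toFinite _)
    obtain ⟨m, v, hv, hsum⟩ := ih x' hx'W (by omega)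
    refine ⟨m + 1, Fin.cons (t • g) v, ?_, ?_⟩
    · intro k
      induction k using Fin.cases with
      | zero =>
        simp only [Fin.cons_zero]
        refine ⟨W.smul_mem _ hgW, smul_ne_zero htpos.ne' hg0, ?_, ?_, ?_⟩
        · have hset : {i | (t • g) i ≠ 0} = {i | g i ≠ 0} := by
            ext i
            simp only [Set.mem_setOf_eq, Pi.smul_apply, smul_eq_mul]
            exact ⟨fun hne => right_ne_zero_of_mul hne, fun hne => mul_ne_zero htpos.ne' hne⟩
          rw [hset]; exact hgcirc
        · intro i
          simp only [Pi.smul_apply, smul_eq_mul, mul_assoc]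
          exact mul_nonneg htpos.le (hgconf i)
        · intro i hxi
          have hgi : g i = 0 := by
            by_contra hc; exact (hgsub hc) hxi
          simp [hgi]
      | succ k =>
        simp only [Fin.cons_succ]
        obtain ⟨hvW, hv0, hvcirc, hvconf, hvz⟩ := hv k
        refine ⟨hvW, hv0, hvcirc, ?_, ?_⟩
        · intro i
          by_cases hvi : v k i = 0
          · simp [hvi]
          · have hx'i : x' i ≠ 0 := fun h0 => hvi (hvz i h0)
            have hxi : x i ≠ 0 := fun h0 => hx'i (hz i h0)
            have h1 : 0 < v k i * x' i :=
              lt_of_le_of_ne (hvconf i) fun h0 => hx'i (by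
                rcases mul_eq_zero.mp h0.symm with h | h
                · exact absurd h hvi
                · exact h)
            have h2 : 0 < x' i * x i :=
              lt_of_le_of_ne (hsc i) fun h0 => (by
                rcases mul_eq_zero.mp h0.symm with h | h
                · exact hx'i h
                · exact hxi h)
            exact (pos_mul_trans h1 h2).le
        · intro i hxi
          exact hvz i (hz i hxi)
    · rw [Fin.sum_cons, ← hsum, hx']
      abel

/-- Hoffman Proximity Theorem. Lower bounds `ℓ ∈ (ℝ ∪ {−∞})^n` and
upper bounds `u ∈ (ℝ ∪ {+∞})^n` are modelled as `EReal`-valued vectors avoiding `⊤`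
resp. `⊥`; `lp = ℓ⁺` and `up = u⁻`. -/
theorem hoffman_proximity {n : ℕ} (W : Submodule ℝ (Fin n → ℝ))
    (l u : Fin n → EReal) (hl : ∀ i, l i ≠ ⊤) (hu : ∀ i, u i ≠ ⊥)
    (lp up : Fin n → ℝ)
    (hlp : ∀ i, lp i = (max (l i) 0).toReal)
    (hup : ∀ i, up i = (max (-(u i)) 0).toReal)
    (hP : ∃ x ∈ W, ∀ i, l i ≤ (x i : EReal) ∧ (x i : EReal) ≤ u i) :
    (∀ x ∈ W, (∀ i, l i ≤ (x i : EReal) ∧ (x i : EReal) ≤ u i) →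
      norm1 (lp + up) ≤ ∑ i, if up i ≠ 0 ∨ lp i ≠ 0 then |x i| else 0) ∧
    (∃ x ∈ W, (∀ i, l i ≤ (x i : EReal) ∧ (x i : EReal) ≤ u i) ∧
      normInf x ≤ kappa W * norm1 (lp + up)) := by
  classical
  have htri : ∀ a : EReal, (∃ r : ℝ, a = (r : EReal)) ∨ a = ⊥ ∨ a = ⊤ := by
    intro a
    induction a using EReal.rec with
    | bot => exact Or.inr (Or.inl rfl)
    | coe r => exact Or.inl ⟨r, rfl⟩
    | top => exact Or.inr (Or.inr rfl)
  have htoReal_nonneg : ∀ a : EReal, 0 ≤ a → 0 ≤ a.toReal := by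
    intro a ha
    rcases htri a with ⟨r, rfl⟩ | rfl | rfl
    · rw [EReal.toReal_coe]; exact_mod_cast ha
    · simp at ha
    · simp
  have hlp_nonneg : ∀ i, 0 ≤ lp i := fun i => by
    rw [hlp i]; exact htoReal_nonneg _ (le_max_right _ _)
  have hup_nonneg : ∀ i, 0 ≤ up i := fun i => by
    rw [hup i]; exact htoReal_nonneg _ (le_max_right _ _)
  have hlp_cases : ∀ i, lp i ≠ 0 → ∃ a : ℝ, l i = (a : EReal) ∧ 0 < a ∧ lp i = a := by
    intro i hne
    rcases htri (l i) with ⟨a, ha⟩ | hb | ht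
    · refine ⟨a, ha, ?_, ?_⟩
      · by_contra hc
        push_neg at hc
        exact hne (by rw [hlp i, ha, max_eq_right (EReal.coe_nonpos.mpr hc), EReal.toReal_zero])
      · by_cases hc : 0 < a
        · rw [hlp i, ha, max_eq_left (EReal.coe_nonneg.mpr hc.le), EReal.toReal_coe]
        · push_neg at hc
          exact absurd (by rw [hlp i, ha, max_eq_right (EReal.coe_nonpos.mpr hc), EReal.toReal_zero]) hne
    · exact absurd (by rw [hlp i, hb, max_eq_right bot_le, EReal.toReal_zero]) hne
    · exact absurd ht (hl i)
  have hup_cases : ∀ i, up i ≠ 0 → ∃ b : ℝ, u i = (b : EReal) ∧ b < 0 ∧ up i = -b := by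
    intro i hne
    rcases htri (u i) with ⟨b, hb⟩ | hbot | ht
    · refine ⟨b, hb, ?_, ?_⟩
      · by_contra hc
        push_neg at hc
        refine hne ?_
        rw [hup i, hb, ← EReal.coe_neg, max_eq_right (EReal.coe_nonpos.mpr (by linarith)),
          EReal.toReal_zero]
      · by_cases hc : b < 0
        · rw [hup i, hb, ← EReal.coe_neg, max_eq_left (EReal.coe_nonneg.mpr (by linarith)),
            EReal.toReal_coe]
        · push_neg at hc
          exact absurd (by rw [hup i, hb, ← EReal.coe_neg,
            max_eq_right (EReal.coe_nonpos.mpr (by linarith)), EReal.toReal_zero]) hne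
    · exact absurd hbot (hu i)
    · exact absurd (by rw [hup i, ht]; simp) hne
  have hup_zero : ∀ (i) (c : ℝ), 0 < c → (c : EReal) ≤ u i → up i = 0 := by
    intro i c hc hcu
    rw [hup i]
    have h1 : -(u i) ≤ ((-c : ℝ) : EReal) := by
      rw [EReal.coe_neg]
      exact EReal.neg_le_neg_iff.mpr hcu
    have h2 : ((-c : ℝ) : EReal) ≤ 0 := EReal.coe_nonpos.mpr (by linarith)
    rw [max_eq_right (h1.trans h2), EReal.toReal_zero]
  have hlp_zero : ∀ (i) (c : ℝ), c < 0 → l i ≤ (c : EReal) → lp i = 0 := by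
    intro i c hc hlc
    rw [hlp i]
    have h2 : ((c : ℝ) : EReal) ≤ 0 := EReal.coe_nonpos.mpr hc.le
    rw [max_eq_right (hlc.trans h2), EReal.toReal_zero]
  constructor
  · -- Part (i)
    intro x _ hfeas
    rw [norm1]
    apply Finset.sum_le_sum
    intro i _
    simp only [Pi.add_apply]
    by_cases hlpi : lp i = 0
    · by_cases hupi : up i = 0
      · simp [hlpi, hupi]
      · obtain ⟨b, hub, hb, hupb⟩ := hup_cases i hupi
        have hxb : x i ≤ b := by
          have := (hfeas i).2; rw [hub] at this; exact_mod_cast this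
        rw [if_pos (Or.inl hupi), hlpi, hupb, abs_of_nonneg (by linarith)]
        have h1 : -b ≤ -(x i) := by linarith
        have h2 : -(x i) ≤ |x i| := neg_le_abs _
        linarith
    · obtain ⟨a, hla, ha, hlpa⟩ := hlp_cases i hlpi
      have hax : a ≤ x i := by
        have := (hfeas i).1; rw [hla] at this; exact_mod_cast this
      have hupz : up i = 0 := by
        apply hup_zero i a ha
        exact le_trans (by exact_mod_cast hax) (hfeas i).2
      rw [if_pos (Or.inr hlpi), hlpa, hupz, abs_of_nonneg (by linarith)]
      have h2 : x i ≤ |x i| := le_abs_self _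
      linarith
  · -- Part (ii)
    obtain ⟨x₀, hx₀W, hx₀f⟩ := hP
    set P : Set (Fin n → ℝ) :=
      {y | y ∈ W ∧ ∀ i, l i ≤ (y i : EReal) ∧ (y i : EReal) ≤ u i} with hPdef
    have hx₀P : x₀ ∈ P := ⟨hx₀W, hx₀f⟩
    have hnorm1_cont : Continuous (norm1 : (Fin n → ℝ) → ℝ) := by
      unfold norm1
      exact continuous_finset_sum _ fun i _ => (continuous_apply i).abs
    have hPclosed : IsClosed P := by
      have h1 : IsClosed (W : Set (Fin n → ℝ)) := Submodule.closed_of_finiteDimensional W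
      have h2 : ∀ i : Fin n, IsClosed {y : Fin n → ℝ | l i ≤ (y i : EReal)} := by
        intro i
        rcases htri (l i) with ⟨a, ha⟩ | hb | ht
        · have hset : {y : Fin n → ℝ | l i ≤ (y i : EReal)} = {y | a ≤ y i} := by
            ext y; rw [Set.mem_setOf_eq, ha, Set.mem_setOf_eq, EReal.coe_le_coe_iff]
          rw [hset]
          exact isClosed_le continuous_const (continuous_apply i)
        · have hset : {y : Fin n → ℝ | l i ≤ (y i : EReal)} = Set.univ := by
            ext y; simp [hb]
          rw [hset]; exact isClosed_univ
        · exact absurd ht (hl i)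
      have h3 : ∀ i : Fin n, IsClosed {y : Fin n → ℝ | (y i : EReal) ≤ u i} := by
        intro i
        rcases htri (u i) with ⟨b, hb⟩ | hbot | ht
        · have hset : {y : Fin n → ℝ | (y i : EReal) ≤ u i} = {y | y i ≤ b} := by
            ext y; rw [Set.mem_setOf_eq, hb, Set.mem_setOf_eq, EReal.coe_le_coe_iff]
          rw [hset]
          exact isClosed_le (continuous_apply i) continuous_const
        · exact absurd hbot (hu i)
        · have hset : {y : Fin n → ℝ | (y i : EReal) ≤ u i} = Set.univ := by
            ext y; simp [ht]
          rw [hset]; exact isClosed_univ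
      have hPeq : P = (W : Set (Fin n → ℝ)) ∩
          ⋂ i, ({y : Fin n → ℝ | l i ≤ (y i : EReal)} ∩ {y | (y i : EReal) ≤ u i}) := by
        ext y
        constructor
        · rintro ⟨hy1, hy2⟩
          exact ⟨hy1, Set.mem_iInter.mpr fun i => ⟨(hy2 i).1, (hy2 i).2⟩⟩
        · rintro ⟨hy1, hy2⟩
          exact ⟨hy1, fun i => ⟨(Set.mem_iInter.mp hy2 i).1, (Set.mem_iInter.mp hy2 i).2⟩⟩
      rw [hPeq]
      exact h1.inter (isClosed_iInter fun i => (h2 i).inter (h3 i))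
    have hone_le : ∀ y : Fin n → ℝ, ∀ i, |y i| ≤ norm1 y := by
      intro y i
      exact Finset.single_le_sum (fun j _ => abs_nonneg (y j)) (Finset.mem_univ i)
    set K := P ∩ {y | norm1 y ≤ norm1 x₀} with hK
    have hKcompact : IsCompact K := by
      apply Metric.isCompact_of_isClosed_isBounded
      · exact hPclosed.inter (isClosed_le hnorm1_cont continuous_const)
      · rw [isBounded_iff_forall_norm_le]
        refine ⟨max (norm1 x₀) 0, fun y hy => ?_⟩
        rw [pi_norm_le_iff_of_nonneg (le_max_right _ _)]
        intro i
        calc ‖y i‖ = |y i| := Real.norm_eq_abs _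
          _ ≤ norm1 y := hone_le y i
          _ ≤ norm1 x₀ := hy.2
          _ ≤ max (norm1 x₀) 0 := le_max_left _ _
    obtain ⟨xm, hxmK, hxmmin⟩ :=
      hKcompact.exists_isMinOn ⟨x₀, hx₀P, show norm1 x₀ ≤ norm1 x₀ from le_rfl⟩ hnorm1_cont.continuousOn
    have hxmP : xm ∈ P := hxmK.1
    have hglobal : ∀ y ∈ P, norm1 xm ≤ norm1 y := by
      intro y hy
      rcases le_or_gt (norm1 y) (norm1 x₀) with hc | hc
      · exact isMinOn_iff.mp hxmmin y ⟨hy, hc⟩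
      · exact le_trans (isMinOn_iff.mp hxmmin x₀ ⟨hx₀P, show norm1 x₀ ≤ norm1 x₀ from le_rfl⟩) hc.le
    refine ⟨xm, hxmP.1, hxmP.2, ?_⟩
    have hrhs0 : 0 ≤ norm1 (lp + up) := Finset.sum_nonneg fun i _ => abs_nonneg _
    have hrhs : 0 ≤ kappa W * norm1 (lp + up) := mul_nonneg (kappa_nonneg W) hrhs0
    obtain ⟨m, v, hv, hsum⟩ :=
      exists_conformal_decomposition W ({i | xm i ≠ 0}.ncard) xm hxmP.1 le_rfl
    have hxmsum : ∀ j, xm j = ∑ k, v k j := by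
      intro j
      rw [hsum]
      simp
    -- key claim: each circuit piece has a coordinate pinned to a finite bound
    have hwitness : ∀ k : Fin m, ∃ i, v k i ≠ 0 ∧
        ((0 < xm i ∧ l i = (xm i : EReal)) ∨ (xm i < 0 ∧ u i = (xm i : EReal))) := by
      intro k
      obtain ⟨hkW, hk0, hkcirc, hkconf, hkz⟩ := hv k
      by_contra hno
      have hlne : ∀ i, v k i ≠ 0 → 0 < xm i → l i ≠ (xm i : EReal) := by
        intro i h1 h2 h3
        exact hno ⟨i, h1, Or.inl ⟨h2, h3⟩⟩
      have hune : ∀ i, v k i ≠ 0 → xm i < 0 → u i ≠ (xm i : EReal) := by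
        intro i h1 h2 h3
        exact hno ⟨i, h1, Or.inr ⟨h2, h3⟩⟩
      have hδ : ∀ i : Fin n, ∃ δ : ℝ, 0 < δ ∧ ∀ ε : ℝ, 0 < ε → ε ≤ δ →
          (l i ≤ ((xm i - ε * v k i : ℝ) : EReal) ∧ ((xm i - ε * v k i : ℝ) : EReal) ≤ u i ∧
           |xm i - ε * v k i| ≤ |xm i| - ε * |v k i|) := by
        intro i
        rcases lt_trichotomy (v k i) 0 with hvk | hvk | hvk
        · -- v k i < 0 hence xm i < 0; upper bound is the binding one
          have hxmi : xm i ≠ 0 := fun h0 => hvk.ne (hkz i h0)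
          have hxmneg : xm i < 0 := by
            rcases lt_trichotomy (xm i) 0 with h | h | h
            · exact h
            · exact absurd h hxmi
            · exfalso; nlinarith [hkconf i]
          have hulb : (xm i : EReal) < u i :=
            lt_of_le_of_ne (hxmP.2 i).2 (fun hc => hune i hvk.ne hxmneg hc.symm)
          have hq : 0 < xm i / v k i := div_pos_of_neg_of_neg hxmneg hvk
          have habs : ∀ ε : ℝ, 0 < ε → ε ≤ xm i / v k i →
              |xm i - ε * v k i| ≤ |xm i| - ε * |v k i| := by
            intro ε hε hεle
            have h1 : xm i ≤ ε * v k i := by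
              have := mul_le_mul_of_nonpos_right hεle (le_of_lt hvk)
              rw [div_mul_cancel₀ _ hvk.ne] at this
              linarith
            have h2 : xm i - ε * v k i ≤ 0 := by linarith
            rw [abs_of_nonpos h2, abs_of_neg hxmneg, abs_of_neg hvk]
            ring_nf
            linarith [le_refl (0:ℝ)]
          rcases htri (u i) with ⟨b, hb⟩ | hbot | htop
          · have hxb : xm i < b := by
              rw [hb] at hulb; exact_mod_cast hulb
            refine ⟨min (xm i / v k i) ((b - xm i) / (-(v k i))), lt_min hq
              (div_pos (by linarith) (by linarith)), ?_⟩
            intro ε hε hεle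
            have hε1 : ε ≤ xm i / v k i := le_trans hεle (min_le_left _ _)
            have hε2 : ε ≤ (b - xm i) / (-(v k i)) := le_trans hεle (min_le_right _ _)
            refine ⟨?_, ?_, habs ε hε hε1⟩
            · have : xm i ≤ xm i - ε * v k i := by nlinarith
              exact le_trans (hxmP.2 i).1 (EReal.coe_le_coe_iff.mpr this)
            · rw [hb]
              have : ε * (-(v k i)) ≤ b - xm i := (le_div_iff₀ (by linarith)).mp hε2
              exact EReal.coe_le_coe_iff.mpr (by linarith)
          · exact absurd hbot (hu i)
          · refine ⟨xm i / v k i, hq, ?_⟩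
            intro ε hε hεle
            refine ⟨?_, ?_, habs ε hε hεle⟩
            · have : xm i ≤ xm i - ε * v k i := by nlinarith
              exact le_trans (hxmP.2 i).1 (EReal.coe_le_coe_iff.mpr this)
            · rw [htop]; exact le_top
        · -- v k i = 0
          refine ⟨1, one_pos, ?_⟩
          intro ε hε hεle
          rw [hvk]
          simp only [mul_zero, sub_zero, abs_zero]
          exact ⟨(hxmP.2 i).1, (hxmP.2 i).2, le_refl _⟩
        · -- 0 < v k i hence 0 < xm i; lower bound is the binding one
          have hxmi : xm i ≠ 0 := fun h0 => hvk.ne' (hkz i h0)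
          have hxmpos : 0 < xm i := by
            rcases lt_trichotomy (xm i) 0 with h | h | h
            · exfalso; nlinarith [hkconf i]
            · exact absurd h hxmi
            · exact h
          have hllb : l i < (xm i : EReal) :=
            lt_of_le_of_ne (hxmP.2 i).1 (hlne i hvk.ne' hxmpos)
          have hq : 0 < xm i / v k i := div_pos hxmpos hvk
          have habs : ∀ ε : ℝ, 0 < ε → ε ≤ xm i / v k i →
              |xm i - ε * v k i| ≤ |xm i| - ε * |v k i| := by
            intro ε hε hεle
            have h1 : ε * v k i ≤ xm i := by
              have := mul_le_mul_of_nonneg_right hεle (le_of_lt hvk)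
              rw [div_mul_cancel₀ _ hvk.ne'] at this
              linarith
            have h2 : 0 ≤ xm i - ε * v k i := by linarith
            rw [abs_of_nonneg h2, abs_of_pos hxmpos, abs_of_pos hvk]
          rcases htri (l i) with ⟨a, ha⟩ | hbot | htop
          · have hax : a < xm i := by
              rw [ha] at hllb; exact_mod_cast hllb
            refine ⟨min (xm i / v k i) ((xm i - a) / v k i), lt_min hq
              (div_pos (by linarith) hvk), ?_⟩
            intro ε hε hεle
            have hε1 : ε ≤ xm i / v k i := le_trans hεle (min_le_left _ _)
            have hε2 : ε ≤ (xm i - a) / v k i := le_trans hεle (min_le_right _ _)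
            refine ⟨?_, ?_, habs ε hε hε1⟩
            · rw [ha]
              have : ε * v k i ≤ xm i - a := (le_div_iff₀ hvk).mp hε2
              exact EReal.coe_le_coe_iff.mpr (by linarith)
            · have : xm i - ε * v k i ≤ xm i := by nlinarith
              exact le_trans (EReal.coe_le_coe_iff.mpr this) (hxmP.2 i).2
          · refine ⟨xm i / v k i, hq, ?_⟩
            intro ε hε hεle
            refine ⟨?_, ?_, habs ε hε hεle⟩
            · rw [hbot]; exact bot_le
            · have : xm i - ε * v k i ≤ xm i := by nlinarith
              exact le_trans (EReal.coe_le_coe_iff.mpr this) (hxmP.2 i).2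
          · exact absurd htop (hl i)
      choose δ hδ using hδ
      obtain ⟨i₀, hi₀⟩ := Function.ne_iff.mp hk0
      have hi₀' : v k i₀ ≠ 0 := by simpa using hi₀
      have hune' : (Finset.univ : Finset (Fin n)).Nonempty := ⟨i₀, Finset.mem_univ _⟩
      set ε := Finset.univ.inf' hune' δ with hε
      have hεpos : 0 < ε := by
        rw [hε]
        exact (Finset.lt_inf'_iff hune').mpr fun i _ => (hδ i).1
      have hεle : ∀ i, ε ≤ δ i := fun i => Finset.inf'_le _ (Finset.mem_univ i)
      set y := xm - ε • v k with hy
      have hyi : ∀ i, y i = xm i - ε * v k i := fun i => by simp [hy]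
      have hyP : y ∈ P := by
        refine ⟨W.sub_mem hxmP.1 (W.smul_mem _ hkW), fun i => ?_⟩
        obtain ⟨hb1, hb2, _⟩ := (hδ i).2 ε hεpos (hεle i)
        rw [hyi i]
        exact ⟨hb1, hb2⟩
      have hsumpos : 0 < ∑ i, |v k i| :=
        Finset.sum_pos' (fun i _ => abs_nonneg _) ⟨i₀, Finset.mem_univ _, abs_pos.mpr hi₀'⟩
      have hlt : norm1 y < norm1 xm := by
        have h1 : norm1 y ≤ norm1 xm - ε * ∑ i, |v k i| := by
          have hdist : ∑ i, (|xm i| - ε * |v k i|) = (∑ i, |xm i|) - ε * ∑ i, |v k i| := by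
            rw [Finset.sum_sub_distrib, Finset.mul_sum]
          rw [norm1, norm1, ← hdist]
          apply Finset.sum_le_sum
          intro i _
          have := ((hδ i).2 ε hεpos (hεle i)).2.2
          rw [hyi i]
          linarith
        nlinarith
      exact absurd (hglobal y hyP) (not_le.mpr hlt)
    choose w hw1 hw2 using hwitness
    have habs : ∀ j, ∑ k, |v k j| = |xm j| := by
      intro j
      rcases lt_trichotomy (xm j) 0 with hx | hx | hx
      · have hle : ∀ k : Fin m, v k j ≤ 0 := by
          intro k
          have := (hv k).2.2.2.1 j
          nlinarith
        have h1 : ∑ k, |v k j| = -∑ k, v k j := by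
          rw [← Finset.sum_neg_distrib]
          exact Finset.sum_congr rfl fun k _ => abs_of_nonpos (hle k)
        rw [h1, abs_of_neg hx, hxmsum j]
      · have hz : ∀ k : Fin m, v k j = 0 := fun k => (hv k).2.2.2.2 j hx
        simp [hx, hz]
      · have hle : ∀ k : Fin m, 0 ≤ v k j := by
          intro k
          have := (hv k).2.2.2.1 j
          nlinarith
        have h1 : ∑ k, |v k j| = ∑ k, v k j :=
          Finset.sum_congr rfl fun k _ => abs_of_nonneg (hle k)
        rw [h1, abs_of_pos hx, hxmsum j]
    have hperk : ∀ (k : Fin m) (i : Fin n), |v k i| ≤ kappa W * |v k (w k)| := fun k i =>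
      elementary_comparable W (hv k).1 (hv k).2.1 (hv k).2.2.1 i (w k) (hw1 k)
    have hS : ∑ k, |v k (w k)| ≤ norm1 (lp + up) := by
      have h1 : ∀ k : Fin m, |v k (w k)| = ∑ j, if w k = j then |v k j| else 0 := by
        intro k
        simp
      calc ∑ k, |v k (w k)| = ∑ k, ∑ j, (if w k = j then |v k j| else 0) :=
            Finset.sum_congr rfl fun k _ => h1 k
        _ = ∑ j, ∑ k, (if w k = j then |v k j| else 0) := Finset.sum_comm
        _ ≤ ∑ j, (lp j + up j) := ?_
        _ = norm1 (lp + up) := by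
            rw [norm1]
            exact Finset.sum_congr rfl fun j _ => by
              rw [Pi.add_apply, abs_of_nonneg (add_nonneg (hlp_nonneg j) (hup_nonneg j))]
      apply Finset.sum_le_sum
      intro j _
      by_cases hex : ∃ k, w k = j
      · obtain ⟨k₀, hk₀⟩ := hex
        have hwit := hw2 k₀
        rw [hk₀] at hwit
        have hxmj : |xm j| = lp j + up j := by
          rcases hwit with ⟨hpos, hleq⟩ | ⟨hneg, hueq⟩
          · have hlpj : lp j = xm j := by
              rw [hlp j, hleq, max_eq_left (EReal.coe_nonneg.mpr hpos.le), EReal.toReal_coe]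
            have hupj : up j = 0 := hup_zero j (xm j) hpos (hleq ▸ (hxmP.2 j).2)
            rw [hlpj, hupj, abs_of_pos hpos]
            ring
          · have hupj : up j = -(xm j) := by
              rw [hup j, hueq, ← EReal.coe_neg,
                max_eq_left (EReal.coe_nonneg.mpr (by linarith)), EReal.toReal_coe]
            have hlpj : lp j = 0 := hlp_zero j (xm j) hneg (hueq ▸ (hxmP.2 j).1)
            rw [hlpj, hupj, abs_of_neg hneg]
            ring
        rw [← hxmj, ← habs j]
        apply Finset.sum_le_sum
        intro k _
        split
        · exact le_refl _
        · exact abs_nonneg _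
      · push_neg at hex
        have hzero : ∀ k ∈ Finset.univ, (if w k = j then |v k j| else 0) = (0:ℝ) :=
          fun k _ => if_neg (hex k)
        rw [Finset.sum_congr rfl hzero, Finset.sum_const_zero]
        exact add_nonneg (hlp_nonneg j) (hup_nonneg j)
    rw [normInf]
    rcases isEmpty_or_nonempty (Fin n) with hn | hn
    · rw [iSup_of_empty', Real.sSup_empty]
      exact hrhs
    · apply ciSup_le
      intro i
      have h1 : |xm i| ≤ ∑ k, |v k i| := by
        rw [hxmsum i]
        exact Finset.abs_sum_le_sum_abs _ _
      calc |xm i| ≤ ∑ k, |v k i| := h1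
        _ ≤ ∑ k, kappa W * |v k (w k)| := Finset.sum_le_sum fun k _ => hperk k i
        _ = kappa W * ∑ k, |v k (w k)| := (Finset.mul_sum _ _ _).symm
        _ ≤ kappa W * norm1 (lp + up) := mul_le_mul_of_nonneg_left hS (kappa_nonneg W)
end

section
/- Let W ⊆ ℝ^n be a linear subspace and c, d ∈ ℝ^n with c ≥ 0. If there exists an optimal solution to Primal-Dual(W,d,c), then there exists an optimal solution (x,s) to Primal-Dual(W,d,c) such that ‖x − d‖_∞ ≤ κ_W ‖d_{Λ(d,c)}‖₁. -/
open scoped BigOperators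

variable {ι : Type*} [Fintype ι] [DecidableEq ι]

namespace OP
variable {n : ℕ}

def SC (w h : Fin n → ℝ) : Prop := ∀ i, (0 ≤ w i → 0 ≤ h i) ∧ (w i ≤ 0 → h i ≤ 0)

lemma SC.zero_of_zero {w h : Fin n → ℝ} (hsc : SC w h) {i} (hi : w i = 0) : h i = 0 :=
  le_antisymm ((hsc i).2 hi.le) ((hsc i).1 hi.ge)

lemma SC.trans {w w' h : Fin n → ℝ} (h1 : SC w w') (h2 : SC w' h) : SC w h := fun i =>
  ⟨fun hw => (h2 i).1 ((h1 i).1 hw), fun hw => (h2 i).2 ((h1 i).2 hw)⟩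

lemma SC.smul {w h : Fin n → ℝ} (hsc : SC w h) {β : ℝ} (hβ : 0 ≤ β) : SC w (β • h) := fun i =>
  ⟨fun hw => mul_nonneg hβ ((hsc i).1 hw), fun hw => mul_nonpos_of_nonneg_of_nonpos hβ ((hsc i).2 hw)⟩

noncomputable def suppF (w : Fin n → ℝ) : Finset (Fin n) :=
  Finset.univ.filter (fun i => w i ≠ 0)

lemma mem_suppF {w : Fin n → ℝ} {i : Fin n} : i ∈ suppF w ↔ w i ≠ 0 := by
  simp [suppF]

lemma suppF_eq_empty {w : Fin n → ℝ} (h : suppF w = ∅) : w = 0 := by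
  funext i
  by_contra hi
  exact Finset.notMem_empty i (h ▸ mem_suppF.mpr hi)

lemma SC.suppF_subset {w h : Fin n → ℝ} (hsc : SC w h) : suppF h ⊆ suppF w := by
  intro i hi
  rw [mem_suppF] at *
  intro hw
  exact hi (hsc.zero_of_zero hw)

end OP

namespace OP
variable {n : ℕ}

lemma mem_coordSubspace {C : Set (Fin n)} {x : Fin n → ℝ} :
    x ∈ coordSubspace C ↔ ∀ i ∉ C, x i = 0 := Iff.rfl

lemma exists_circuit_subset (W : Submodule ℝ (Fin n → ℝ)) (w : Fin n → ℝ) (hw : w ∈ W)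
    (h0 : w ≠ 0) :
    ∃ g, g ∈ W ∧ g ≠ 0 ∧ (∀ i, w i = 0 → g i = 0) ∧ IsCircuit W {i | g i ≠ 0} := by
  classical
  set T : Set ℕ := {k | ∃ g, g ∈ W ∧ g ≠ 0 ∧ (∀ i, w i = 0 → g i = 0) ∧ (suppF g).card = k}
    with hT
  have hTne : T.Nonempty := ⟨(suppF w).card, w, hw, h0, fun i hi => hi, rfl⟩
  obtain ⟨g, hgW, hg0, hgsupp, hgcard⟩ := Nat.sInf_mem hTne
  -- minimality
  have hmin : ∀ u, u ∈ W → u ≠ 0 → (∀ i, g i = 0 → u i = 0) → suppF u = suppF g := by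
    intro u huW hu0 husupp
    have hsub : suppF u ⊆ suppF g := by
      intro i hi
      rw [mem_suppF] at *
      exact fun h => hi (husupp i h)
    have hmem : (suppF u).card ∈ T :=
      ⟨u, huW, hu0, fun i hi => husupp i (hgsupp i hi), rfl⟩
    have h1 : sInf T ≤ (suppF u).card := Nat.sInf_le hmem
    rw [← hgcard] at h1
    exact Finset.eq_of_subset_of_card_le hsub h1
  refine ⟨g, hgW, hg0, hgsupp, ?_, ?_⟩
  · -- finrank = 1
    set C : Set (Fin n) := {i | g i ≠ 0} with hC
    have hgC : g ∈ W ⊓ coordSubspace C := by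
      refine ⟨hgW, fun i hi => ?_⟩
      simpa [hC] using hi
    set v : ↥(W ⊓ coordSubspace C) := ⟨g, hgC⟩ with hv
    have hvne : v ≠ 0 := by
      intro h
      exact hg0 (by simpa [hv] using congrArg Subtype.val h)
    rw [finrank_eq_one_iff_of_nonzero v hvne]
    rw [Submodule.eq_top_iff']
    intro u
    rw [Submodule.mem_span_singleton]
    obtain ⟨u, huW, huC⟩ := u
    by_cases hu0 : u = 0
    · exact ⟨0, by apply Subtype.ext; simp [hu0]⟩
    · -- u ≠ 0, supp u ⊆ C
      have husupp : ∀ i, g i = 0 → u i = 0 := by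
        intro i hi
        exact huC i (by simpa [hC] using hi)
      obtain ⟨i₀, hi₀⟩ : ∃ i₀, g i₀ ≠ 0 := by
        by_contra h
        push_neg at h
        exact hg0 (funext fun i => h i)
      set a : ℝ := u i₀ / g i₀ with ha
      have key : u = a • g := by
        by_contra hne
        have hvne' : u - a • g ≠ 0 := fun h => hne (sub_eq_zero.mp h)
        have hmemW : u - a • g ∈ W := W.sub_mem huW (W.smul_mem a hgW)
        have hsupp' : ∀ i, g i = 0 → (u - a • g) i = 0 := by
          intro i hi
          simp [husupp i hi, hi]
        have hzero : (u - a • g) i₀ = 0 := by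
          simp [ha]
          field_simp
          ring
        have hcard : (suppF (u - a • g)).card ∈ T := by
          refine ⟨u - a • g, hmemW, hvne', fun i hi => hsupp' i (hgsupp i hi), rfl⟩
        have hle : sInf T ≤ (suppF (u - a • g)).card := Nat.sInf_le hcard
        have hsub : suppF (u - a • g) ⊆ (suppF g).erase i₀ := by
          intro i hi
          rw [Finset.mem_erase, mem_suppF]
          rw [mem_suppF] at hi
          constructor
          · intro h; rw [h] at hi; exact hi hzero
          · intro h; exact hi (hsupp' i h)
        have hlt : (suppF (u - a • g)).card < (suppF g).card := by
          have h1 : ((suppF g).erase i₀).card < (suppF g).card :=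
            Finset.card_erase_lt_of_mem (mem_suppF.mpr hi₀)
          exact lt_of_le_of_lt (Finset.card_le_card hsub) h1
        omega
      refine ⟨a, ?_⟩
      apply Subtype.ext
      simpa [hv] using key.symm
  · -- no strict subset is one-dimensional
    intro C' hC' hrank
    have : Nontrivial ↥(W ⊓ coordSubspace C') := by
      apply Module.nontrivial_of_finrank_pos (R := ℝ)
      omega
    obtain ⟨u, hune⟩ := exists_ne (0 : ↥(W ⊓ coordSubspace C'))
    obtain ⟨u, huW, huC'⟩ := u
    have hu0 : u ≠ 0 := fun h => hune (Subtype.ext h)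
    obtain ⟨j, hjC, hjC'⟩ : ∃ j, j ∈ {i | g i ≠ 0} ∧ j ∉ C' := by
      obtain ⟨j, hj1, hj2⟩ := Set.exists_of_ssubset hC'
      exact ⟨j, hj1, hj2⟩
    -- supp u ⊆ C' so u j = 0, but minimality says suppF u = suppF g ∋ j
    have husupp : ∀ i, g i = 0 → u i = 0 := by
      intro i hi
      by_cases hiC' : i ∈ C'
      · exact absurd (hC'.1 hiC') (by simpa using hi)
      · exact huC' i hiC'
    have heq := hmin u huW hu0 husupp
    have huj : u j ≠ 0 := by
      have : j ∈ suppF u := heq ▸ mem_suppF.mpr (by simpa using hjC)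
      exact mem_suppF.mp this
    exact huj (huC' j hjC')


lemma exists_conformal_circuit (W : Submodule ℝ (Fin n → ℝ)) :
    ∀ N : ℕ, ∀ w : Fin n → ℝ, (suppF w).card ≤ N → w ∈ W → w ≠ 0 →
      ∃ h, h ∈ W ∧ h ≠ 0 ∧ IsCircuit W {i | h i ≠ 0} ∧ SC w h := by
  intro N
  induction N with
  | zero =>
    intro w hcard hw h0
    exact absurd (suppF_eq_empty (Finset.card_eq_zero.mp (Nat.le_zero.mp hcard))) h0
  | succ N ih =>
    intro w hcard hw h0
    obtain ⟨g, hgW, hg0, hgsupp, hgcirc⟩ := exists_circuit_subset W w hw h0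
    obtain ⟨i₀, hi₀⟩ : ∃ i₀, g i₀ ≠ 0 := by
      by_contra h; push_neg at h; exact hg0 (funext h)
    have hwi₀ : w i₀ ≠ 0 := fun h => hi₀ (hgsupp i₀ h)
    -- sign-adjust g
    set g' : Fin n → ℝ := if 0 < w i₀ * g i₀ then g else -g with hg'
    have hg'W : g' ∈ W := by
      rw [hg']; split
      · exact hgW
      · exact W.neg_mem hgW
    have hg'0 : g' ≠ 0 := by
      rw [hg']; split
      · exact hg0
      · exact fun h => hg0 (by simpa using congrArg Neg.neg h)
    have hg'supp : ∀ i, w i = 0 → g' i = 0 := by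
      intro i hi
      rw [hg']; split <;> simp [hgsupp i hi]
    have hg'circ : IsCircuit W {i | g' i ≠ 0} := by
      rw [hg']; split
      · exact hgcirc
      · convert hgcirc using 2
        ext i; simp
    have hpos : 0 < w i₀ * g' i₀ := by
      rcases lt_trichotomy (w i₀ * g i₀) 0 with h | h | h
      · rw [hg', if_neg (by linarith)]
        simpa using h
      · exact absurd (mul_eq_zero.mp h) (by push_neg; exact ⟨hwi₀, hi₀⟩)
      · rwa [hg', if_pos h]
    by_cases hSC : SC w g'
    · exact ⟨g', hg'W, hg'0, hg'circ, hSC⟩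
    -- exists a coordinate with strictly opposite signs
    have hopp : ∃ i₁, w i₁ * g' i₁ < 0 := by
      by_contra hno
      push_neg at hno
      apply hSC
      intro i
      constructor
      · intro hwi
        rcases eq_or_lt_of_le hwi with h | h
        · rw [hg'supp i h.symm]
        · nlinarith [hno i]
      · intro hwi
        rcases eq_or_lt_of_le hwi with h | h
        · rw [hg'supp i h]
        · nlinarith [hno i]
    obtain ⟨i₁, hi₁⟩ := hopp
    classical
    set P : Finset (Fin n) := Finset.univ.filter (fun i => 0 < w i * g' i) with hP
    have hPne : P.Nonempty := ⟨i₀, by simp [hP, hpos]⟩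
    set α : ℝ := P.inf' hPne (fun i => w i / g' i) with hα
    have hratio : ∀ i ∈ P, 0 < w i / g' i := by
      intro i hi
      rw [hP, Finset.mem_filter] at hi
      rcases mul_pos_iff.mp hi.2 with ⟨h1, h2⟩ | ⟨h1, h2⟩
      · exact div_pos h1 h2
      · exact div_pos_of_neg_of_neg h1 h2
    have hαpos : 0 < α := by
      rw [hα, Finset.lt_inf'_iff]
      exact hratio
    set w' : Fin n → ℝ := w - α • g' with hw'
    have hw'W : w' ∈ W := W.sub_mem hw (W.smul_mem α hg'W)
    have hSCw' : SC w w' := by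
      intro i
      have hwi' : w' i = w i - α * g' i := rfl
      rcases lt_trichotomy (w i * g' i) 0 with hty | hty | hty
      · rcases mul_neg_iff.mp hty with ⟨h1, h2⟩ | ⟨h1, h2⟩
        · constructor
          · intro _; rw [hwi']; nlinarith
          · intro h; linarith
        · constructor
          · intro h; linarith
          · intro _; rw [hwi']; nlinarith
      · have hgz : g' i = 0 := by
          rcases mul_eq_zero.mp hty with h | h
          · rw [hg'supp i h]
          · exact h
        rw [hwi', hgz]
        simp
      · have hiP : i ∈ P := by simp [hP, hty]
        have hle : α ≤ w i / g' i := by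
          rw [hα]; exact Finset.inf'_le _ hiP
        rcases mul_pos_iff.mp hty with ⟨h1, h2⟩ | ⟨h1, h2⟩
        · constructor
          · intro _
            rw [hwi']
            rw [le_div_iff₀ h2] at hle
            linarith
          · intro h; linarith
        · constructor
          · intro h; linarith
          · intro _
            rw [hwi']
            have h3 := (le_div_iff_of_neg h2).mp hle
            linarith
    have hw'0 : w' ≠ 0 := by
      intro h
      have : w' i₁ = 0 := by rw [h]; rfl
      have hwi' : w i₁ = α * g' i₁ := by
        have : w i₁ - α * g' i₁ = 0 := this
        linarith
      rcases mul_neg_iff.mp hi₁ with ⟨h1, h2⟩ | ⟨h1, h2⟩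
      · nlinarith
      · nlinarith
    -- support strictly decreases
    obtain ⟨istar, histar, hαeq⟩ := Finset.exists_mem_eq_inf' hPne (fun i => w i / g' i)
    have histar' : w istar ≠ 0 ∧ g' istar ≠ 0 := by
      rw [hP, Finset.mem_filter] at histar
      constructor
      · intro h; rw [h] at histar; simp at histar
      · intro h; rw [h] at histar; simp at histar
    have hw'star : w' istar = 0 := by
      show w istar - α * g' istar = 0
      have hα2 : α = w istar / g' istar := hαeq
      rw [hα2, div_mul_cancel₀ _ histar'.2]
      ring
    have hsubset : suppF w' ⊆ suppF w := by
      intro i hi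
      rw [mem_suppF] at *
      intro h
      exact hi (hSCw'.zero_of_zero h)
    have hssub : (suppF w').card < (suppF w).card := by
      apply Finset.card_lt_card
      rw [Finset.ssubset_iff_of_subset hsubset]
      exact ⟨istar, mem_suppF.mpr histar'.1, fun hmem => (mem_suppF.mp hmem) hw'star⟩
    obtain ⟨h, hhW, hh0, hhcirc, hhSC⟩ := ih w' (by omega) hw'W hw'0
    exact ⟨h, hhW, hh0, hhcirc, hSCw'.trans hhSC⟩


lemma exists_decomposition (W : Submodule ℝ (Fin n → ℝ)) :
    ∀ N : ℕ, ∀ w : Fin n → ℝ, (suppF w).card ≤ N → w ∈ W →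
      ∃ (m : ℕ) (H : Fin m → Fin n → ℝ),
        (∀ k, H k ∈ W ∧ H k ≠ 0 ∧ IsCircuit W {i | H k i ≠ 0} ∧ SC w (H k)) ∧
        ∑ k, H k = w := by
  intro N
  induction N with
  | zero =>
    intro w hcard hw
    have h0 : w = 0 := suppF_eq_empty (Finset.card_eq_zero.mp (Nat.le_zero.mp hcard))
    exact ⟨0, Fin.elim0, fun k => k.elim0, by simp [h0]⟩
  | succ N ih =>
    intro w hcard hw
    by_cases h0 : w = 0
    · exact ⟨0, Fin.elim0, fun k => k.elim0, by simp [h0]⟩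
    obtain ⟨h, hhW, hh0, hhcirc, hhSC⟩ :=
      exists_conformal_circuit W (N + 1) w hcard hw h0
    classical
    set A : Finset (Fin n) := suppF h with hA
    have hAne : A.Nonempty := by
      by_contra hne
      rw [Finset.not_nonempty_iff_eq_empty] at hne
      exact hh0 (suppF_eq_empty hne)
    have hratio : ∀ i ∈ A, 0 < w i / h i := by
      intro i hi
      rw [hA, mem_suppF] at hi
      have hwi : w i ≠ 0 := fun hz => hi (hhSC.zero_of_zero hz)
      rcases lt_trichotomy (h i) 0 with h1 | h1 | h1
      · have hw1 : w i < 0 := by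
          rcases lt_trichotomy (w i) 0 with h2 | h2 | h2
          · exact h2
          · exact absurd h2 hwi
          · exact absurd ((hhSC i).1 h2.le) (by linarith)
        exact div_pos_of_neg_of_neg hw1 h1
      · exact absurd h1 hi
      · have hw1 : 0 < w i := by
          rcases lt_trichotomy (w i) 0 with h2 | h2 | h2
          · exact absurd ((hhSC i).2 h2.le) (by linarith)
          · exact absurd h2 hwi
          · exact h2
        exact div_pos hw1 h1
    set β : ℝ := A.inf' hAne (fun i => w i / h i) with hβ
    have hβpos : 0 < β := by
      rw [hβ, Finset.lt_inf'_iff]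
      exact hratio
    set h₁ : Fin n → ℝ := β • h with hh₁
    set w' : Fin n → ℝ := w - h₁ with hw'
    have hw'W : w' ∈ W := W.sub_mem hw (W.smul_mem β hhW)
    have hSCw' : SC w w' := by
      intro i
      have hwi' : w' i = w i - β * h i := rfl
      by_cases hiA : i ∈ A
      · have hle : β ≤ w i / h i := by rw [hβ]; exact Finset.inf'_le _ hiA
        rw [hA, mem_suppF] at hiA
        rcases lt_trichotomy (h i) 0 with h1 | h1 | h1
        · have h3 := (le_div_iff_of_neg h1).mp hle
          have hw1 : w i < 0 := by
            by_contra hcon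
            push_neg at hcon
            exact absurd ((hhSC i).1 hcon) (by linarith)
          constructor
          · intro hcc; linarith
          · intro _; rw [hwi']; nlinarith
        · exact absurd h1 hiA
        · have h3 := (le_div_iff₀ h1).mp hle
          have hw1 : 0 < w i := by
            by_contra hcon
            push_neg at hcon
            exact absurd ((hhSC i).2 hcon) (by linarith)
          constructor
          · intro _; rw [hwi']; nlinarith
          · intro hcc; linarith
      · rw [hA, mem_suppF] at hiA
        push_neg at hiA
        rw [hwi', hiA]
        simp
    obtain ⟨istar, histar, hβeq⟩ := Finset.exists_mem_eq_inf' hAne (fun i => w i / h i)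
    have hhstar : h istar ≠ 0 := by rwa [hA, mem_suppF] at histar
    have hw'star : w' istar = 0 := by
      show w istar - β * h istar = 0
      have hβ2 : β = w istar / h istar := hβeq
      rw [hβ2, div_mul_cancel₀ _ hhstar]
      ring
    have hwstar : w istar ≠ 0 := by
      intro hz
      exact hhstar (hhSC.zero_of_zero hz)
    have hsubset : suppF w' ⊆ suppF w := hSCw'.suppF_subset
    have hssub : (suppF w').card < (suppF w).card := by
      apply Finset.card_lt_card
      rw [Finset.ssubset_iff_of_subset hsubset]
      exact ⟨istar, mem_suppF.mpr hwstar, fun hmem => (mem_suppF.mp hmem) hw'star⟩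
    obtain ⟨m, H, hHprop, hHsum⟩ := ih w' (by omega) hw'W
    refine ⟨m + 1, Fin.cons h₁ H, ?_, ?_⟩
    · intro k
      have hsuppeq : {i | h₁ i ≠ 0} = {i | h i ≠ 0} := by
        ext i
        simp only [hh₁, Pi.smul_apply, smul_eq_mul, Set.mem_setOf_eq]
        constructor
        · intro hne hz; exact hne (by rw [hz]; ring)
        · intro hne hz
          rcases mul_eq_zero.mp hz with hcc | hcc
          · exact absurd hcc (ne_of_gt hβpos)
          · exact hne hcc
      have hh₁0 : h₁ ≠ 0 := by
        intro hz
        apply hh0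
        funext i
        have hci := congrFun hz i
        simp only [hh₁, Pi.smul_apply, smul_eq_mul, Pi.zero_apply] at hci ⊢
        rcases mul_eq_zero.mp hci with hcc | hcc
        · exact absurd hcc (ne_of_gt hβpos)
        · exact hcc
      refine Fin.cases ?_ ?_ k
      · refine ⟨W.smul_mem β hhW, by simpa using hh₁0, ?_, by simpa using hhSC.smul hβpos.le⟩
        simp only [Fin.cons_zero]
        rw [hsuppeq]
        exact hhcirc
      · intro k'
        obtain ⟨p1, p2, p3, p4⟩ := hHprop k'
        exact ⟨by simpa using p1, by simpa using p2, by simpa using p3,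
          by simpa using hSCw'.trans p4⟩
    · rw [Fin.sum_cons, hHsum]
      funext i
      simp [hw']


def kset (W : Submodule ℝ (Fin n → ℝ)) : Set ℝ :=
  {1} ∪ {r | ∃ C : Set (Fin n), IsCircuit W C ∧ ∃ g ∈ W, g ≠ 0 ∧ {i | g i ≠ 0} = C ∧
    r = sSup ((fun i => |g i|) '' C) / sInf ((fun i => |g i|) '' C)}

lemma kappa_eq (W : Submodule ℝ (Fin n → ℝ)) : kappa W = sSup (kset W) := rfl

lemma csSup_scale {S : Set ℝ} (hne : S.Nonempty) (hfin : S.Finite) {a : ℝ} (ha : 0 ≤ a) :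
    sSup ((fun y => a * y) '' S) = a * sSup S := by
  apply IsGreatest.csSup_eq
  constructor
  · exact ⟨sSup S, hne.csSup_mem hfin, rfl⟩
  · rintro y ⟨x, hx, rfl⟩
    exact mul_le_mul_of_nonneg_left (le_csSup hfin.bddAbove hx) ha

lemma csInf_scale {S : Set ℝ} (hne : S.Nonempty) (hfin : S.Finite) {a : ℝ} (ha : 0 ≤ a) :
    sInf ((fun y => a * y) '' S) = a * sInf S := by
  apply IsLeast.csInf_eq
  constructor
  · exact ⟨sInf S, hne.csInf_mem hfin, rfl⟩
  · rintro y ⟨x, hx, rfl⟩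
    exact mul_le_mul_of_nonneg_left (csInf_le hfin.bddBelow hx) ha

lemma ratio_smul {g : Fin n → ℝ} {C : Set (Fin n)} (hCne : C.Nonempty) {a : ℝ} (ha : a ≠ 0) :
    sSup ((fun i => |(a • g) i|) '' C) / sInf ((fun i => |(a • g) i|) '' C) =
    sSup ((fun i => |g i|) '' C) / sInf ((fun i => |g i|) '' C) := by
  have h1 : (fun i : Fin n => |(a • g) i|) = (fun y => |a| * y) ∘ (fun i => |g i|) := by
    funext i
    simp [abs_mul]
  rw [h1, Set.image_comp]
  have hfin : ((fun i => |g i|) '' C).Finite := (C.toFinite).image _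
  have hne : ((fun i => |g i|) '' C).Nonempty := hCne.image _
  rw [csSup_scale hne hfin (abs_nonneg a), csInf_scale hne hfin (abs_nonneg a)]
  rw [mul_div_mul_left _ _ (abs_ne_zero.mpr ha)]

lemma circuit_proportional (W : Submodule ℝ (Fin n → ℝ)) {C : Set (Fin n)}
    (hcirc : IsCircuit W C) {g g₀ : Fin n → ℝ} (hg : g ∈ W) (hg0 : g ≠ 0)
    (hgC : {i | g i ≠ 0} = C) (hg₀ : g₀ ∈ W) (hg₀0 : g₀ ≠ 0) (hg₀C : {i | g₀ i ≠ 0} = C) :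
    ∃ a : ℝ, a ≠ 0 ∧ g₀ = a • g := by
  have hgmem : g ∈ W ⊓ coordSubspace C := by
    refine ⟨hg, fun i hi => ?_⟩
    by_contra hne
    exact hi (hgC ▸ hne)
  have hg₀mem : g₀ ∈ W ⊓ coordSubspace C := by
    refine ⟨hg₀, fun i hi => ?_⟩
    by_contra hne
    exact hi (hg₀C ▸ hne)
  set v : ↥(W ⊓ coordSubspace C) := ⟨g, hgmem⟩ with hv
  have hvne : v ≠ 0 := fun h => hg0 (by simpa [hv] using congrArg Subtype.val h)
  have hspan := (finrank_eq_one_iff_of_nonzero v hvne).mp hcirc.1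
  have hmem : (⟨g₀, hg₀mem⟩ : ↥(W ⊓ coordSubspace C)) ∈ Submodule.span ℝ {v} := by
    rw [hspan]; trivial
  obtain ⟨a, hae⟩ := Submodule.mem_span_singleton.mp hmem
  have hgg : g₀ = a • g := by
    have := congrArg Subtype.val hae
    simpa [hv] using this.symm
  refine ⟨a, ?_, hgg⟩
  intro hz
  rw [hz] at hgg
  simp at hgg
  exact hg₀0 hgg

lemma kset_bddAbove (W : Submodule ℝ (Fin n → ℝ)) : BddAbove (kset W) := by
  classical
  set F : Set (Fin n) → ℝ := fun C =>
    if hE : ∃ g, g ∈ W ∧ g ≠ 0 ∧ {i | g i ≠ 0} = C then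
      sSup ((fun i => |hE.choose i|) '' C) / sInf ((fun i => |hE.choose i|) '' C)
    else 1 with hF
  have hsub : kset W ⊆ {1} ∪ (F '' Set.univ) := by
    rintro r (hr | ⟨C, hcirc, g, hgW, hg0, hgC, hr⟩)
    · exact Or.inl hr
    · right
      refine ⟨C, trivial, ?_⟩
    
      have hE : ∃ g, g ∈ W ∧ g ≠ 0 ∧ {i | g i ≠ 0} = C := ⟨g, hgW, hg0, hgC⟩
      rw [hF]
      simp only [dif_pos hE]
      obtain ⟨hgW', hg0', hgC'⟩ := hE.choose_spec
      obtain ⟨a, ha, hae⟩ := circuit_proportional W hcirc hgW hg0 hgC hgW' hg0' hgC'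
      have hCne : C.Nonempty := by
        obtain ⟨i, hi⟩ : ∃ i, g i ≠ 0 := by
          by_contra hcc; push_neg at hcc; exact hg0 (funext hcc)
        exact ⟨i, hgC ▸ hi⟩
      rw [hae, ratio_smul hCne ha, hr]
  have hfin : ({1} ∪ (F '' Set.univ) : Set ℝ).Finite :=
    (Set.finite_singleton 1).union ((Set.finite_univ).image F)
  exact (hfin.bddAbove).mono hsub

lemma one_le_kappa (W : Submodule ℝ (Fin n → ℝ)) : 1 ≤ kappa W :=
  le_csSup (kset_bddAbove W) (Or.inl rfl)

lemma kappa_bound (W : Submodule ℝ (Fin n → ℝ)) {h : Fin n → ℝ} (hhW : h ∈ W) (hh0 : h ≠ 0)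
    (hhcirc : IsCircuit W {i | h i ≠ 0}) (i j : Fin n) (hj : h j ≠ 0) :
    |h i| ≤ kappa W * |h j| := by
  by_cases hi : h i = 0
  · rw [hi, abs_zero]
    exact mul_nonneg (le_trans zero_le_one (one_le_kappa W)) (abs_nonneg _)
  · set C : Set (Fin n) := {i | h i ≠ 0} with hC
    set S : Set ℝ := (fun i => |h i|) '' C with hS
    have hfin : S.Finite := (C.toFinite).image _
    have hne : S.Nonempty := ⟨|h j|, j, hj, rfl⟩
    have hSpos : ∀ y ∈ S, 0 < y := by
      rintro y ⟨k, hk, rfl⟩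
      exact abs_pos.mpr hk
    have hInfmem : sInf S ∈ S := hne.csInf_mem hfin
    have hInfpos : 0 < sInf S := hSpos _ hInfmem
    set r : ℝ := sSup S / sInf S with hr
    have hrk : r ∈ kset W := Or.inr ⟨C, hhcirc, h, hhW, hh0, rfl, rfl⟩
    have hrκ : r ≤ kappa W := le_csSup (kset_bddAbove W) hrk
    have h1 : |h i| ≤ sSup S := le_csSup hfin.bddAbove ⟨i, hi, rfl⟩
    have h2 : sInf S ≤ |h j| := csInf_le hfin.bddBelow ⟨j, hj, rfl⟩
    have h3 : sSup S = r * sInf S := by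
      rw [hr, div_mul_cancel₀ _ (ne_of_gt hInfpos)]
    calc |h i| ≤ sSup S := h1
      _ = r * sInf S := h3
      _ ≤ kappa W * sInf S := mul_le_mul_of_nonneg_right hrκ hInfpos.le
      _ ≤ kappa W * |h j| := mul_le_mul_of_nonneg_left h2
          (le_trans zero_le_one (one_le_kappa W))


lemma SC.ratio_pos {w h : Fin n → ℝ} (hsc : SC w h) {i : Fin n} (hi : h i ≠ 0) :
    0 < w i / h i := by
  rcases lt_trichotomy (h i) 0 with h1 | h1 | h1
  · have hw1 : w i < 0 := by
      rcases lt_trichotomy (w i) 0 with h2 | h2 | h2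
      · exact h2
      · exact absurd (hsc.zero_of_zero h2) hi
      · exact absurd ((hsc i).1 h2.le) (by linarith)
    exact div_pos_of_neg_of_neg hw1 h1
  · exact absurd h1 hi
  · have hw1 : 0 < w i := by
      rcases lt_trichotomy (w i) 0 with h2 | h2 | h2
      · exact absurd ((hsc i).2 h2.le) (by linarith)
      · exact absurd (hsc.zero_of_zero h2) hi
      · exact h2
    exact div_pos hw1 h1

lemma abs_sum_decomp {m : ℕ} {H : Fin m → Fin n → ℝ} {w : Fin n → ℝ}
    (hSC : ∀ k, SC w (H k)) (hsum : ∑ k, H k = w) (i : Fin n) :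
    ∑ k, |H k i| = |w i| := by
  have hs : ∑ k, H k i = w i := by
    rw [← hsum]
    simp
  rcases le_total 0 (w i) with hwi | hwi
  · have : ∀ k : Fin m, |H k i| = H k i := fun k => abs_of_nonneg (((hSC k) i).1 hwi)
    rw [Finset.sum_congr rfl (fun k _ => this k), hs, abs_of_nonneg hwi]
  · have : ∀ k : Fin m, |H k i| = -(H k i) := fun k => abs_of_nonpos (((hSC k) i).2 hwi)
    rw [Finset.sum_congr rfl (fun k _ => this k)]
    rw [show (∑ k : Fin m, -H k i) = -∑ k : Fin m, H k i by rw [Finset.sum_neg_distrib]]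
    rw [hs, abs_of_nonpos hwi]

lemma inner_identity (W : Submodule ℝ (Fin n → ℝ)) {x d s c : Fin n → ℝ}
    (hx : x - d ∈ W) (hs : s - c ∈ orthComp W) :
    ∑ i, x i * s i = ∑ i, x i * c i + ∑ i, d i * s i - ∑ i, d i * c i := by
  have h0 : ∑ i, (x - d) i * (s - c) i = 0 := hs (x - d) hx
  have h0' : ∑ i, (x i - d i) * (s i - c i) = 0 := by
    rw [← h0]
    exact Finset.sum_congr rfl (fun i _ => by simp)
  have expand : ∑ i, x i * s i =
      ∑ i, ((x i - d i) * (s i - c i) + (x i * c i + d i * s i - d i * c i)) :=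
    Finset.sum_congr rfl (fun i _ => by ring)
  rw [expand, Finset.sum_add_distrib, h0', zero_add]
  rw [Finset.sum_sub_distrib, Finset.sum_add_distrib]

lemma exists_minimizer {S : Set (Fin n → ℝ)} (hSc : IsClosed S) (hSne : S.Nonempty)
    (d : Fin n → ℝ) :
    ∃ x ∈ S, ∀ y ∈ S, (∑ i, |x i - d i|) ≤ ∑ i, |y i - d i| := by
  obtain ⟨x₀, hx₀⟩ := hSne
  set f : (Fin n → ℝ) → ℝ := fun x => ∑ i, |x i - d i| with hf
  have hfc : Continuous f := by
    apply continuous_finset_sum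
    intro i _
    exact ((continuous_apply i).sub continuous_const).abs
  have hfnonneg : ∀ x, 0 ≤ f x := fun x => Finset.sum_nonneg (fun i _ => abs_nonneg _)
  set K : Set (Fin n → ℝ) := S ∩ {x | f x ≤ f x₀} with hK
  have hKclosed : IsClosed K := hSc.inter (isClosed_le hfc continuous_const)
  have hKbdd : Bornology.IsBounded K := by
    apply (Metric.isBounded_closedBall (x := d) (r := f x₀)).subset
    intro x hx
    rw [Metric.mem_closedBall]
    rw [dist_pi_le_iff (hfnonneg x₀)]
    intro b
    rw [Real.dist_eq]
    calc |x b - d b| ≤ f x :=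
          Finset.single_le_sum (f := fun i => |x i - d i|) (fun i _ => abs_nonneg _)
            (Finset.mem_univ b)
      _ ≤ f x₀ := hx.2
  have hKcompact : IsCompact K := Metric.isCompact_iff_isClosed_bounded.mpr ⟨hKclosed, hKbdd⟩
  have hKne : K.Nonempty := ⟨x₀, hx₀, le_refl (f x₀)⟩
  obtain ⟨x, hxK, hmin⟩ := hKcompact.exists_isMinOn hKne hfc.continuousOn
  rw [isMinOn_iff] at hmin
  refine ⟨x, hxK.1, ?_⟩
  intro y hy
  by_cases hy2 : f y ≤ f x₀
  · exact hmin y ⟨hy, hy2⟩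
  · push_neg at hy2
    have h1 : f x ≤ f x₀ := hxK.2
    exact le_trans h1 hy2.le

end OP

/-- if `c ≥ 0` and Primal-Dual(W,d,c) has an optimal solution, then it
has an optimal solution `(x,s)` with `‖x − d‖_∞ ≤ κ_W ‖d_{Λ(d,c)}‖₁`,
where `Λ(d,c) = supp(d⁻) ∪ supp(c⁺)`. -/
theorem optimal_proximity {n : ℕ} (W : Submodule ℝ (Fin n → ℝ)) (c d : Fin n → ℝ)
    (hc : ∀ i, 0 ≤ c i) (hopt : ∃ x s : Fin n → ℝ, IsOptimalPair W d c x s) :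
    ∃ x s : Fin n → ℝ, IsOptimalPair W d c x s ∧
      normInf (x - d) ≤ kappa W * ∑ i, if d i < 0 ∨ 0 < c i then |d i| else 0 := by
  classical
  obtain ⟨x₀, s, ⟨hx₀W, hx₀pos⟩, ⟨hsW, hspos⟩, hx₀s⟩ := hopt
  set S : Set (Fin n → ℝ) :=
    {x | x - d ∈ W ∧ (∀ i, 0 ≤ x i) ∧ ∑ i, x i * s i = 0} with hSdef
  have hSclosed : IsClosed S := by
    have h1 : IsClosed {x : Fin n → ℝ | x - d ∈ W} := by
      have : {x : Fin n → ℝ | x - d ∈ W} = (fun x => x - d) ⁻¹' (W : Set (Fin n → ℝ)) := rfl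
      rw [this]
      exact IsClosed.preimage (continuous_id.sub continuous_const)
        (Submodule.closed_of_finiteDimensional W)
    have h2 : IsClosed {x : Fin n → ℝ | ∀ i, 0 ≤ x i} := by
      have : {x : Fin n → ℝ | ∀ i, 0 ≤ x i} = ⋂ i, {x : Fin n → ℝ | 0 ≤ x i} := by
        ext x; simp
      rw [this]
      exact isClosed_iInter (fun i => isClosed_le continuous_const (continuous_apply i))
    have h3 : IsClosed {x : Fin n → ℝ | ∑ i, x i * s i = 0} := by
      apply isClosed_eq _ continuous_const
      exact continuous_finset_sum _ (fun i _ => (continuous_apply i).mul continuous_const)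
    exact (h1.inter (h2.inter h3))
  have hSne : S.Nonempty := ⟨x₀, hx₀W, hx₀pos, hx₀s⟩
  obtain ⟨x, hxS, hxmin⟩ := OP.exists_minimizer hSclosed hSne d
  obtain ⟨hxW, hxpos, hxs⟩ := hxS
  refine ⟨x, s, ⟨⟨hxW, hxpos⟩, ⟨hsW, hspos⟩, hxs⟩, ?_⟩
  set w : Fin n → ℝ := x - d with hwdef
  have hwapp : ∀ i, w i = x i - d i := fun i => rfl
  obtain ⟨m, H, hHprop, hHsum⟩ := OP.exists_decomposition W (OP.suppF w).card w le_rfl hxW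
  have hval : ∀ y : Fin n → ℝ, y - d ∈ W →
      ∑ i, y i * s i = ∑ i, y i * c i + ∑ i, d i * s i - ∑ i, d i * c i :=
    fun y hy => OP.inner_identity W hy hsW
  have hkey : ∀ k : Fin m, (∃ i, x i = 0 ∧ 0 < H k i) ∨ (∑ i, c i * H k i < 0) := by
    intro k
    by_contra hcon
    push_neg at hcon
    obtain ⟨hA, hB⟩ := hcon
    obtain ⟨hhW, hh0, hhcirc, hhSC⟩ := hHprop k
    set h := H k with hhdef
    have hAne : (OP.suppF h).Nonempty := by
      by_contra hne
      rw [Finset.not_nonempty_iff_eq_empty] at hne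
      exact hh0 (OP.suppF_eq_empty hne)
    set t : Fin n → ℝ :=
      fun i => if 0 < h i then min (w i / h i) (x i / h i) else w i / h i with htdef
    have htpos : ∀ i ∈ OP.suppF h, 0 < t i := by
      intro i hi
      rw [OP.mem_suppF] at hi
      have hr := hhSC.ratio_pos hi
      have htv : t i = if 0 < h i then min (w i / h i) (x i / h i) else w i / h i := rfl
      rw [htv]
      by_cases hpos : 0 < h i
      · rw [if_pos hpos]
        have hxi : 0 < x i := by
          rcases eq_or_lt_of_le (hxpos i) with he | hlt
          · exact absurd hpos (by simpa using hA i he.symm)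
          · exact hlt
        exact lt_min hr (div_pos hxi hpos)
      · rw [if_neg hpos]; exact hr
    set ε : ℝ := (OP.suppF h).inf' hAne t with hεdef
    have hεpos : 0 < ε := by rw [hεdef, Finset.lt_inf'_iff]; exact htpos
    have hεle : ∀ i ∈ OP.suppF h, ε ≤ t i := fun i hi => Finset.inf'_le _ hi
    set x' : Fin n → ℝ := x - ε • h with hx'def
    have hx'W : x' - d ∈ W := by
      have he : x' - d = w - ε • h := by
        funext i
        simp only [hx'def, hwdef, Pi.sub_apply, Pi.smul_apply, smul_eq_mul]
        ring
      rw [he]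
      exact W.sub_mem hxW (W.smul_mem ε hhW)
    have hx'app : ∀ i, x' i = x i - ε * h i := fun i => rfl
    have hx'pos : ∀ i, 0 ≤ x' i := by
      intro i
      by_cases hiA : h i = 0
      · rw [hx'app i, hiA]
        simpa using hxpos i
      · have hi : i ∈ OP.suppF h := OP.mem_suppF.mpr hiA
        have hle := hεle i hi
        rcases lt_trichotomy (h i) 0 with h1 | h1 | h1
        · rw [hx'app i]; nlinarith [hxpos i]
        · exact absurd h1 hiA
        · rw [show t i = (if 0 < h i then min (w i / h i) (x i / h i) else w i / h i) from rfl,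
            if_pos h1] at hle
          have h2 : ε ≤ x i / h i := le_trans hle (min_le_right _ _)
          rw [le_div_iff₀ h1] at h2
          rw [hx'app i]; linarith
    have hsum_x'c : ∑ i, x' i * c i = ∑ i, x i * c i - ε * ∑ i, c i * h i := by
      rw [Finset.mul_sum, ← Finset.sum_sub_distrib]
      exact Finset.sum_congr rfl (fun i _ => by rw [hx'app i]; ring)
    have hx's : ∑ i, x' i * s i = 0 := by
      have e1 := hval x hxW
      have e2 := hval x' hx'W
      rw [hxs] at e1
      have heq : ∑ i, x' i * s i = -(ε * ∑ i, c i * h i) := by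
        rw [e2, hsum_x'c]; linarith
      have hge : 0 ≤ ∑ i, x' i * s i :=
        Finset.sum_nonneg (fun i _ => mul_nonneg (hx'pos i) (hspos i))
      have hle' : ∑ i, x' i * s i ≤ 0 := by rw [heq]; nlinarith
      linarith
    have hmin := hxmin x' ⟨hx'W, hx'pos, hx's⟩
    have hdrop : ∀ i, |x' i - d i| = |x i - d i| - ε * |h i| := by
      intro i
      have hxi' : x' i - d i = w i - ε * h i := by rw [hx'app i, hwapp i]; ring
      by_cases hiA : h i = 0
      · rw [hxi', hiA, ← hwapp i]; simp
      · have hi : i ∈ OP.suppF h := OP.mem_suppF.mpr hiA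
        have hle := hεle i hi
        have hlew : ε ≤ w i / h i := by
          rw [show t i = (if 0 < h i then min (w i / h i) (x i / h i) else w i / h i) from rfl]
            at hle
          by_cases hpos : 0 < h i
          · rw [if_pos hpos] at hle
            exact le_trans hle (min_le_left _ _)
          · rwa [if_neg hpos] at hle
        rw [← hwapp i, hxi']
        rcases lt_trichotomy (h i) 0 with h1 | h1 | h1
        · have h3 := (le_div_iff_of_neg h1).mp hlew
          have hw1 : w i < 0 := by
            by_contra hcc
            push_neg at hcc
            exact absurd ((hhSC i).1 hcc) (by linarith)
          rw [abs_of_nonpos (by linarith), abs_of_neg hw1, abs_of_neg h1]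
          ring
        · exact absurd h1 hiA
        · have h3 := (le_div_iff₀ h1).mp hlew
          have hw1 : 0 < w i := by
            by_contra hcc
            push_neg at hcc
            exact absurd ((hhSC i).2 hcc) (by linarith)
          rw [abs_of_nonneg (by linarith), abs_of_pos hw1, abs_of_pos h1]
    have hsumdrop : ∑ i, |x' i - d i| = (∑ i, |x i - d i|) - ε * ∑ i, |h i| := by
      rw [Finset.mul_sum, ← Finset.sum_sub_distrib]
      exact Finset.sum_congr rfl (fun i _ => hdrop i)
    have hpos : 0 < ∑ i, |h i| := by
      obtain ⟨i₀, hi₀⟩ := hAne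
      rw [OP.mem_suppF] at hi₀
      exact Finset.sum_pos' (fun i _ => abs_nonneg _)
        ⟨i₀, Finset.mem_univ i₀, abs_pos.mpr hi₀⟩
    rw [hsumdrop] at hmin
    nlinarith
  have hchoice : ∀ k : Fin m, ∃ p, (d p < 0 ∨ 0 < c p) ∧ H k p ≠ 0 ∧ |w p| ≤ |d p| := by
    intro k
    obtain ⟨hhW, hh0, hhcirc, hhSC⟩ := hHprop k
    rcases hkey k with ⟨i, hxi, hhi⟩ | hB
    · have hwi : 0 < w i := by
        by_contra hcc
        push_neg at hcc
        exact absurd ((hhSC i).2 hcc) (by linarith)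
      have hdi : d i = -(w i) := by
        have h5 := hwapp i
        rw [hxi] at h5
        linarith
      refine ⟨i, Or.inl (by rw [hdi]; linarith), ne_of_gt hhi, ?_⟩
      rw [hdi, abs_neg]
    · have hex : ∃ i, c i * H k i < 0 := by
        by_contra hcc
        push_neg at hcc
        exact absurd (Finset.sum_nonneg (fun i _ => hcc i)) (not_le.mpr hB)
      obtain ⟨i, hi⟩ := hex
      have hci : 0 < c i := by
        rcases eq_or_lt_of_le (hc i) with he | hlt
        · rw [← he] at hi; simp at hi
        · exact hlt
      have hhi : H k i < 0 := by nlinarith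
      have hwi : w i < 0 := by
        by_contra hcc
        push_neg at hcc
        exact absurd ((hhSC i).1 hcc) (by linarith)
      have hdi : 0 < d i := by
        have h5 := hwapp i
        nlinarith [hxpos i]
      refine ⟨i, Or.inr hci, ne_of_lt hhi, ?_⟩
      rw [abs_of_neg hwi, abs_of_pos hdi]
      have h5 := hwapp i
      nlinarith [hxpos i]
  choose j hj1 hj2 hj3 using hchoice
  have habs := OP.abs_sum_decomp (fun k => (hHprop k).2.2.2) hHsum
  have hκ0 : 0 ≤ kappa W := le_trans zero_le_one (OP.one_le_kappa W)
  set Λf : Finset (Fin n) := Finset.univ.filter (fun p => d p < 0 ∨ 0 < c p) with hΛ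
  have hchain : ∀ i, |w i| ≤ kappa W * ∑ p ∈ Λf, |d p| := by
    intro i
    calc |w i| = ∑ k, |H k i| := (habs i).symm
      _ ≤ ∑ k, kappa W * |H k (j k)| := Finset.sum_le_sum (fun k _ =>
          OP.kappa_bound W (hHprop k).1 (hHprop k).2.1 (hHprop k).2.2.1 i (j k) (hj2 k))
      _ = kappa W * ∑ k, |H k (j k)| := by rw [Finset.mul_sum]
      _ ≤ kappa W * ∑ p ∈ Λf, |d p| := by
          refine mul_le_mul_of_nonneg_left ?_ hκ0
          have hjmem : ∀ k, j k ∈ Λf := by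
            intro k
            rw [hΛ, Finset.mem_filter]
            exact ⟨Finset.mem_univ _, hj1 k⟩
          have hstep1 : ∀ k, |H k (j k)| = ∑ p ∈ Λf, if j k = p then |H k p| else 0 := by
            intro k
            rw [Finset.sum_ite_eq Λf (j k) (fun p => |H k p|), if_pos (hjmem k)]
          have hstep2 : ∀ p, (∑ k, if j k = p then |H k p| else 0) ≤ |d p| := by
            intro p
            by_cases hex : ∃ k, j k = p
            · obtain ⟨k₀, hk₀⟩ := hex
              have h1 : (∑ k, if j k = p then |H k p| else 0) ≤ ∑ k, |H k p| :=
                Finset.sum_le_sum (fun k _ => by split <;> simp)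
              have h2 : (∑ k, |H k p|) = |w p| := habs p
              have h3 : |w p| ≤ |d p| := by rw [← hk₀]; exact hj3 k₀
              linarith
            · push_neg at hex
              rw [Finset.sum_eq_zero (fun k _ => if_neg (hex k))]
              exact abs_nonneg _
          calc ∑ k, |H k (j k)|
              = ∑ k, ∑ p ∈ Λf, if j k = p then |H k p| else 0 :=
                Finset.sum_congr rfl (fun k _ => hstep1 k)
            _ = ∑ p ∈ Λf, ∑ k, if j k = p then |H k p| else 0 := Finset.sum_comm
            _ ≤ ∑ p ∈ Λf, |d p| := Finset.sum_le_sum (fun p _ => hstep2 p)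
  have hRHS : (∑ i, if d i < 0 ∨ 0 < c i then |d i| else 0) = ∑ p ∈ Λf, |d p| := by
    rw [hΛ, Finset.sum_filter]
  rw [hRHS]
  exact Real.iSup_le hchain
    (mul_nonneg hκ0 (Finset.sum_nonneg (fun p _ => abs_nonneg _)))
end
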